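/- arXiv:2411.17520 — 9 statements merged into one kernel-verified Lean document; each statement's English description precedes it below -/
import Mathlib

section
/- Let f : ℝ≥0 → ℝ≥0 be a Young function satisfying (Dec)ᶜ₂ on [t₀,∞), i.e. t ↦ f'₊(t)/t is non-increasing there. Then for all σ, ρ > 0: f(σ) - f(ρ) ≤ (f'₊(max{ρ,t₀})/(2·max{ρ,t₀}))·(σ² - ρ²) + f(t₀) + f'₊(t₀)·t₀. -/
open Set

private lemma right_deriv_nonpos_le {g g' : ℝ → ℝ} {a b : ℝ} (hab : a ≤ b)
    (hcont : ContinuousOn g (Set.Icc a b))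
    (hd : ∀ t ∈ Set.Ico a b, HasDerivWithinAt g (g' t) (Set.Ioi t) t)
    (h0 : ∀ t ∈ Set.Ico a b, g' t ≤ 0) : g b ≤ g a :=
  image_le_of_deriv_right_le_deriv_boundary (B := fun _ => g a) (B' := fun _ => (0:ℝ))
    hcont (fun x hx => (hd x hx).Ici_of_Ioi) (le_refl (g a)) continuousOn_const
    (fun x _ => hasDerivWithinAt_const x _ (g a)) h0 (Set.right_mem_Icc.2 hab)

private lemma right_deriv_nonneg_ge {g g' : ℝ → ℝ} {a b : ℝ} (hab : a ≤ b)
    (hcont : ContinuousOn g (Set.Icc a b))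
    (hd : ∀ t ∈ Set.Ico a b, HasDerivWithinAt g (g' t) (Set.Ioi t) t)
    (h0 : ∀ t ∈ Set.Ico a b, 0 ≤ g' t) : g a ≤ g b := by
  have := right_deriv_nonpos_le (g := fun t => -g t) (g' := fun t => -g' t) hab
    hcont.neg (fun t ht => (hd t ht).neg) (fun t ht => neg_nonpos.2 (h0 t ht))
  simpa using this

/-- Quadratic comparison for a Young function satisfying `(Dec)ᶜ₂` on `[t₀,∞)`. -/
theorem young_cdec2_quad_comparison (f f' : ℝ → ℝ) (t₀ : ℝ) (ht₀ : 0 ≤ t₀)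
    (hconv : ConvexOn ℝ (Set.Ici (0:ℝ)) f)
    (hmono : MonotoneOn f (Set.Ici (0:ℝ)))
    (hzero : f 0 = 0)
    (hnonneg : ∀ x ∈ Set.Ici (0:ℝ), 0 ≤ f x)
    (hderiv : ∀ t ≥ (0:ℝ), HasDerivWithinAt f (f' t) (Set.Ioi t) t)
    (hdec : AntitoneOn (fun t => f' t / t) (Set.Ici t₀)) :
    ∀ σ ρ : ℝ, 0 < σ → 0 < ρ →
      f σ - f ρ ≤ f' (max ρ t₀) / (2 * max ρ t₀) * (σ ^ 2 - ρ ^ 2)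
        + f t₀ + f' t₀ * t₀ := by
  -- f' is nonnegative on [0,∞)
  have hf' : ∀ t : ℝ, 0 ≤ t → 0 ≤ f' t := by
    intro t ht
    have H := hasDerivWithinAt_iff_tendsto_slope.1 (hderiv t ht)
    rw [show Set.Ioi t \ {t} = Set.Ioi t from Set.diff_singleton_eq_self (by simp)] at H
    refine ge_of_tendsto H ?_
    filter_upwards [self_mem_nhdsWithin] with y hy
    have hty : t < y := hy
    have hfy : f t ≤ f y := hmono ht (le_trans ht hty.le) hty.le
    rw [slope_def_field]
    exact div_nonneg (by linarith) (by linarith)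
  -- continuity of f on (0,∞)
  have hfc : ContinuousOn f (Set.Ioi (0:ℝ)) :=
    (hconv.subset Set.Ioi_subset_Ici_self (convex_Ioi 0)).continuousOn isOpen_Ioi
  intro σ ρ hσ hρ
  set m := max ρ t₀ with hmdef
  have hm : 0 < m := lt_of_lt_of_le hρ (le_max_left _ _)
  have ht₀m : t₀ ≤ m := le_max_right _ _
  set c := f' m / (2 * m) with hcdef
  have hc0 : 0 ≤ c := div_nonneg (hf' m hm.le) (by linarith)
  have h2c : 2 * c = f' m / m := by rw [hcdef]; field_simp
  set h : ℝ → ℝ := fun t => f t - c * t ^ 2 with hhdef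
  -- right derivative of h
  have hhd : ∀ t : ℝ, 0 ≤ t → HasDerivWithinAt h (f' t - c * (2 * t)) (Set.Ioi t) t := by
    intro t ht
    exact (hderiv t ht).sub (((hasDerivAt_pow 2 t).hasDerivWithinAt.const_mul c).congr_deriv
      (by ring))
  -- continuity of h on closed subintervals of (0,∞)
  have hhc : ∀ x y : ℝ, 0 < x → ContinuousOn h (Set.Icc x y) := by
    intro x y hx
    refine ContinuousOn.sub (hfc.mono ?_) (Continuous.continuousOn (by continuity))
    intro z hz; exact lt_of_lt_of_le hx hz.1
  -- h is nondecreasing on [t₀, m] (positive points)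
  have Hup : ∀ x y : ℝ, t₀ ≤ x → x ≤ y → y ≤ m → 0 < x → h x ≤ h y := by
    intro x y hxt hxy hym hx
    refine right_deriv_nonneg_ge hxy (hhc x y hx) (fun t ht => hhd t (le_trans hx.le ht.1)) ?_
    intro t ht
    have htpos : 0 < t := lt_of_lt_of_le hx ht.1
    have htm : t ≤ m := le_trans ht.2.le hym
    have hh := hdec (Set.mem_Ici.2 (le_trans hxt ht.1)) (Set.mem_Ici.2 ht₀m) htm
    simp only at hh
    rw [div_le_div_iff₀ hm htpos] at hh
    have h1 : (f' m / m) * t ≤ f' t := by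
      rw [div_mul_eq_mul_div, div_le_iff₀ hm]; linarith
    nlinarith [h2c]
  -- h is nonincreasing on [m, ∞)
  have Hdown : ∀ x y : ℝ, m ≤ x → x ≤ y → h y ≤ h x := by
    intro x y hmx hxy
    refine right_deriv_nonpos_le hxy (hhc x y (lt_of_lt_of_le hm hmx))
      (fun t ht => hhd t (le_trans (le_trans hm.le hmx) ht.1)) ?_
    intro t ht
    have htpos : 0 < t := lt_of_lt_of_le (lt_of_lt_of_le hm hmx) ht.1
    have hmt : m ≤ t := le_trans hmx ht.1
    have hh := hdec (Set.mem_Ici.2 ht₀m) (Set.mem_Ici.2 (le_trans ht₀m hmt)) hmt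
    simp only at hh
    rw [div_le_div_iff₀ htpos hm] at hh
    have h1 : f' t ≤ (f' m / m) * t := by
      rw [div_mul_eq_mul_div, le_div_iff₀ hm]; linarith
    nlinarith [h2c]
  -- some basic bounds
  have hK1 : 0 ≤ f t₀ := hnonneg t₀ ht₀
  have hK2 : 0 ≤ f' t₀ * t₀ := mul_nonneg (hf' t₀ ht₀) ht₀
  have hct₀ : c * t₀ ^ 2 ≤ f' t₀ * t₀ / 2 := by
    rcases eq_or_lt_of_le ht₀ with h | h
    · simp [← h]
    · have := hdec (Set.mem_Ici.2 le_rfl) (Set.mem_Ici.2 ht₀m) ht₀m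
      -- f' m / m ≤ f' t₀ / t₀
      rw [div_le_div_iff₀ hm h] at this
      rw [hcdef, div_mul_eq_mul_div, div_le_div_iff₀ (by linarith) (by norm_num)]
      nlinarith
  -- the goal, restated via h
  have key : h σ ≤ h ρ + (f t₀ + f' t₀ * t₀) → f σ - f ρ ≤ c * (σ ^ 2 - ρ ^ 2) + f t₀ + f' t₀ * t₀ := by
    intro hk; simp only [hhdef] at hk; nlinarith
  have hρm : ρ ≤ m := le_max_left _ _
  have hmax : m = max ρ t₀ := hmdef
  clear_value m c h
  apply key
  rcases le_or_gt σ ρ with h1 | h1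
  · rcases le_or_gt t₀ σ with h2 | h2
    · have := Hup σ ρ h2 h1 hρm hσ
      linarith
    · -- σ < t₀
      have hfσt : f σ ≤ f t₀ := hmono (le_of_lt hσ) ht₀ h2.le
      have hcσ : 0 ≤ c * σ ^ 2 := mul_nonneg hc0 (sq_nonneg _)
      rcases le_or_gt t₀ ρ with h3 | h3
      · -- t₀ ≤ ρ ≤ m
        have hup := Hup t₀ ρ le_rfl h3 hρm (lt_trans hσ h2)
        have : h σ ≤ h t₀ + (f t₀ + f' t₀ * t₀) := by
          simp only [hhdef]; linarith
        linarith
      · -- ρ < t₀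
        have hfσρ : f σ ≤ f ρ := hmono (le_of_lt hσ) (le_of_lt hρ) h1
        have hcρ : c * ρ ^ 2 ≤ c * t₀ ^ 2 :=
          mul_le_mul_of_nonneg_left (pow_le_pow_left₀ hρ.le h3.le 2) hc0
        simp only [hhdef]; linarith
  · rcases le_or_gt σ m with h2 | h2
    · -- ρ < σ ≤ m forces σ ≤ t₀
      have hσt : σ ≤ t₀ := by
        by_contra hh
        exact absurd h2 (not_le.2 (hmax ▸ max_lt h1 (not_le.1 hh)))
      have hfσt : f σ ≤ f t₀ := hmono (le_of_lt hσ) ht₀ hσt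
      have hfρ : 0 ≤ f ρ := hnonneg ρ (le_of_lt hρ)
      have hcd : c * ρ ^ 2 ≤ c * σ ^ 2 :=
        mul_le_mul_of_nonneg_left (pow_le_pow_left₀ hρ.le h1.le 2) hc0
      simp only [hhdef]; linarith
    · -- m < σ
      have hdown := Hdown m σ le_rfl h2.le
      rcases le_or_gt t₀ ρ with h3 | h3
      · have hmρ : m = ρ := hmax.trans (max_eq_left h3)
        rw [hmρ] at hdown
        linarith
      · have hmt : m = t₀ := hmax.trans (max_eq_right h3.le)
        have hfρ : 0 ≤ f ρ := hnonneg ρ (le_of_lt hρ)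
        have hcρ : c * ρ ^ 2 ≤ c * t₀ ^ 2 :=
          mul_le_mul_of_nonneg_left (pow_le_pow_left₀ hρ.le h3.le 2) hc0
        have : h t₀ ≤ h ρ + (f t₀ + f' t₀ * t₀) := by
          simp only [hhdef]; linarith
        rw [hmt] at hdown
        linarith
end

section
/- Let f : ℝ≥0 → ℝ≥0 be a Young function and κ > 0. Then the κ-truncation T_κf equals the Lipschitz envelope t ↦ inf{ f(s) + f'₊(κ)·|s-t| : s ∈ [0,∞) }. -/
/-- The κ-truncation of a Young function equals the Lipschitz envelope with
constant `f'(κ)`. -/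
theorem kappa_truncation_eq_lipschitz_envelope (f f' : ℝ → ℝ) (κ : ℝ) (hκ : 0 < κ)
    (hconv : ConvexOn ℝ (Set.Ici (0:ℝ)) f)
    (hmono : MonotoneOn f (Set.Ici (0:ℝ)))
    (hzero : f 0 = 0)
    (hnonneg : ∀ x ∈ Set.Ici (0:ℝ), 0 ≤ f x)
    (hderiv : ∀ t ≥ (0:ℝ), HasDerivWithinAt f (f' t) (Set.Ioi t) t) :
    ∀ t ≥ (0:ℝ),
      (if t ≤ κ then f t else f' κ * (t - κ) + f κ)
        = sInf {y : ℝ | ∃ s ≥ (0:ℝ), y = f s + f' κ * |s - t|} := by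
  -- the slope of f based at any point a ≥ 0 tends to f' a from the right
  have hslope : ∀ a ≥ (0:ℝ), Filter.Tendsto (fun z => (f z - f a) / (z - a))
      (nhdsWithin a (Set.Ioi a)) (nhds (f' a)) := by
    intro a ha
    have := (hasDerivWithinAt_iff_tendsto_slope' (s := Set.Ioi a) (x := a)
      (Set.notMem_Ioi.mpr le_rfl)).mp (hderiv a ha)
    rwa [slope_fun_def_field] at this
  -- supporting line: f a + f' a * (x - a) ≤ f x for a, x ≥ 0
  have hsupp : ∀ a ≥ (0:ℝ), ∀ x ≥ (0:ℝ), f a + f' a * (x - a) ≤ f x := by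
    intro a ha x hx
    rcases lt_trichotomy x a with hxa | rfl | hax
    · -- x < a
      have key : ∀ z ∈ Set.Ioi a, (f a - f x) / (a - x) ≤ (f z - f a) / (z - a) :=
        fun z hz => hconv.slope_mono_adjacent hx (le_trans ha (le_of_lt hz)) hxa hz
      have hle : (f a - f x) / (a - x) ≤ f' a :=
        ge_of_tendsto (hslope a ha) (eventually_nhdsWithin_of_forall key)
      rw [div_le_iff₀ (by linarith)] at hle
      have : f' a * (x - a) = -(f' a * (a - x)) := by ring
      linarith
    · simp
    · -- a < x
      have key : ∀ z ∈ Set.Ioo a x, (f z - f a) / (z - a) ≤ (f x - f a) / (x - a) := by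
        intro z hz
        exact hconv.secant_mono ha (le_trans ha (le_of_lt hz.1))
          (le_trans ha (le_of_lt hax)) (ne_of_gt hz.1) (ne_of_gt hax) hz.2.le
      have hmem : Set.Ioo a x ∈ nhdsWithin a (Set.Ioi a) :=
        mem_nhdsWithin.mpr ⟨Set.Iio x, isOpen_Iio, hax, fun y hy => ⟨hy.2, hy.1⟩⟩
      have hle : f' a ≤ (f x - f a) / (x - a) :=
        le_of_tendsto (hslope a ha) (Filter.eventually_iff_exists_mem.mpr
          ⟨Set.Ioo a x, hmem, key⟩)
      rw [le_div_iff₀ (by linarith)] at hle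
      linarith
  -- f' κ ≥ 0
  have hd0 : 0 ≤ f' κ := by
    have key : ∀ z ∈ Set.Ioi κ, 0 ≤ (f z - f κ) / (z - κ) := by
      intro z hz
      have := hmono (Set.mem_Ici.mpr hκ.le) (Set.mem_Ici.mpr (hκ.le.trans hz.le)) hz.le
      exact div_nonneg (by linarith) (by linarith [Set.mem_Ioi.mp hz])
    exact ge_of_tendsto (hslope κ hκ.le) (eventually_nhdsWithin_of_forall key)
  -- Lipschitz-type bound on [0, κ] : f y - f x ≤ f' κ * (y - x) for 0 ≤ x < y ≤ κ
  have hlip : ∀ x ≥ (0:ℝ), ∀ y, x < y → y ≤ κ → f y - f x ≤ f' κ * (y - x) := by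
    intro x hx y hxy hyκ
    have key : ∀ z ∈ Set.Ioi κ, (f y - f x) / (y - x) ≤ (f z - f κ) / (z - κ) := by
      intro z hz
      have hz' := Set.mem_Ioi.mp hz
      rcases eq_or_lt_of_le hyκ with rfl | hyκ'
      · exact hconv.slope_mono_adjacent hx (le_trans hx (by linarith)) hxy hz'
      · have h1 := hconv.slope_mono_adjacent hx (Set.mem_Ici.mpr hκ.le) hxy hyκ'
        have h2 := hconv.slope_mono_adjacent (le_trans hx hxy.le)
          (Set.mem_Ici.mpr (hκ.le.trans hz'.le)) hyκ' hz'
        exact h1.trans h2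
    have hle : (f y - f x) / (y - x) ≤ f' κ :=
      ge_of_tendsto (hslope κ hκ.le) (eventually_nhdsWithin_of_forall key)
    rw [div_le_iff₀ (by linarith)] at hle
    linarith
  intro t ht
  set S := {y : ℝ | ∃ s ≥ (0:ℝ), y = f s + f' κ * |s - t|} with hS
  have hne : S.Nonempty := ⟨f t + f' κ * |t - t|, t, ht, rfl⟩
  by_cases htκ : t ≤ κ
  · rw [if_pos htκ]
    have hbdd : ∀ y ∈ S, f t ≤ y := by
      rintro y ⟨s, hs, rfl⟩
      rcases le_or_gt t s with hts | hst
      · have h1 := hmono (Set.mem_Ici.mpr ht) (Set.mem_Ici.mpr (ht.trans hts)) hts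
        have h2 : 0 ≤ f' κ * |s - t| := mul_nonneg hd0 (abs_nonneg _)
        linarith
      · have h1 := hlip s hs t hst htκ
        have h2 : |s - t| = t - s := by rw [abs_of_nonpos (by linarith)]; ring
        rw [h2]; linarith
    refine le_antisymm ?_ (csInf_le ⟨f t, hbdd⟩ ⟨t, ht, by simp⟩)
    exact le_csInf hne hbdd
  · rw [if_neg htκ]
    push_neg at htκ
    have hbdd : ∀ y ∈ S, f' κ * (t - κ) + f κ ≤ y := by
      rintro y ⟨s, hs, rfl⟩
      have hsupp' := hsupp κ hκ.le s hs
      have habs : (t - κ) - |s - t| ≤ s - κ := by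
        rcases abs_cases (s - t) with ⟨h, _⟩ | ⟨h, _⟩ <;> rw [h] <;> linarith
      nlinarith [mul_nonneg hd0 (abs_nonneg (s - t))]
    refine le_antisymm ?_ (csInf_le ⟨_, hbdd⟩ ⟨κ, hκ.le, by
      rw [abs_of_nonpos (by linarith)]; ring⟩)
    exact le_csInf hne hbdd
end

section
/- Let f : ℝ≥0 → ℝ≥0 be a Young function satisfying (Dec)ⁿ₂ (t ↦ f(t)/t² non-increasing on [t₀,∞)). Then there exists C > 0 such that f'₊(s)·t ≤ C·(1 + f(s) + f(t)) for all s,t ≥ 0. -/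
open Set Filter Topology

/-- For a Young function satisfying `(Dec)ⁿ₂`, there is `C > 0` with
`f'(s)·t ≤ C·(1 + f(s) + f(t))` for all `s,t ≥ 0`. -/
theorem young_ndec2_rightDeriv_bound (f f' : ℝ → ℝ) (t₀ : ℝ) (ht₀ : 0 ≤ t₀)
    (hconv : ConvexOn ℝ (Set.Ici (0:ℝ)) f)
    (hmono : MonotoneOn f (Set.Ici (0:ℝ)))
    (hzero : f 0 = 0)
    (hnonneg : ∀ x ∈ Set.Ici (0:ℝ), 0 ≤ f x)
    (hderiv : ∀ t ≥ (0:ℝ), HasDerivWithinAt f (f' t) (Set.Ioi t) t)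
    (hdec : AntitoneOn (fun t => f t / t ^ 2) (Set.Ici t₀)) :
    ∃ C > (0:ℝ), ∀ s ≥ (0:ℝ), ∀ t ≥ (0:ℝ),
      f' s * t ≤ C * (1 + f s + f t) := by
  -- the right derivative is the limit of slopes from the right
  have slope_lim : ∀ s ≥ (0:ℝ), Tendsto (slope f s) (𝓝[>] s) (𝓝 (f' s)) := by
    intro s hs
    have h := (hderiv s hs)
    rw [hasDerivWithinAt_iff_tendsto_slope] at h
    simpa [Set.diff_singleton_eq_self (Set.notMem_Ioi.mpr le_rfl)] using h
  -- key slope bound: f'(s) ≤ (f x - f s)/(x - s) for x > s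
  have key_le : ∀ s, 0 ≤ s → ∀ x, s < x → f' s ≤ (f x - f s) / (x - s) := by
    intro s hs x hx
    refine le_of_tendsto (slope_lim s hs) ?_
    filter_upwards [Ioc_mem_nhdsGT hx] with y hy
    rw [slope_def_field]
    exact hconv.secant_mono (mem_Ici.mpr hs) (mem_Ici.mpr (le_of_lt (lt_of_le_of_lt hs hy.1)))
      (mem_Ici.mpr (le_of_lt (lt_of_le_of_lt hs hx))) (ne_of_gt hy.1) (ne_of_gt hx) hy.2
  -- nonnegativity of the right derivative
  have key_nonneg : ∀ s, 0 ≤ s → 0 ≤ f' s := by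
    intro s hs
    refine ge_of_tendsto (slope_lim s hs) ?_
    filter_upwards [self_mem_nhdsWithin] with y (hy : s < y)
    rw [slope_def_field]
    apply div_nonneg
    · have := hmono (mem_Ici.mpr hs) (mem_Ici.mpr (le_of_lt (lt_of_le_of_lt hs hy))) hy.le
      linarith
    · linarith
  -- the doubling bound: f'(s) * s ≤ 3 f(s) for s ≥ t₀
  have h3fs : ∀ s, t₀ ≤ s → f' s * s ≤ 3 * f s := by
    intro s hs'
    have hs0 : (0:ℝ) ≤ s := le_trans ht₀ hs'
    rcases eq_or_lt_of_le hs0 with h | h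
    · rw [← h]; simp [hzero]
    · have hdec' := hdec (mem_Ici.mpr hs') (mem_Ici.mpr (by linarith : t₀ ≤ 2 * s))
        (by linarith : s ≤ 2 * s)
      simp only at hdec'
      have h4 : f (2 * s) ≤ 4 * f s := by
        rw [div_le_div_iff₀ (by positivity) (by positivity)] at hdec'
        nlinarith [mul_pos h h]
      have hk := key_le s hs0 (2 * s) (by linarith)
      have h2s : (2 * s - s) = s := by ring
      rw [h2s] at hk
      have := (le_div_iff₀ h).mp hk
      linarith
  by_cases hex : ∃ a, 0 < a ∧ 0 < f a
  · obtain ⟨a, ha, hfa⟩ := hex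
    set M := f (t₀ + 1) with hMdef
    have hM : 0 ≤ M := hnonneg _ (mem_Ici.mpr (by linarith))
    -- linear lower bound for f in the nondegenerate case
    have hlin : ∀ t, 0 ≤ t → M * t ≤ M * a + M * a / f a * f t := by
      intro t ht
      rcases le_or_gt t a with h | h
      · have h1 : M * t ≤ M * a := mul_le_mul_of_nonneg_left h hM
        have h2 : 0 ≤ M * a / f a * f t := by
          apply mul_nonneg (by positivity) (hnonneg _ (mem_Ici.mpr ht))
        linarith
      · -- f a / a ≤ f t / t by secant monotonicity through 0
        have hsec := hconv.secant_mono (mem_Ici.mpr le_rfl) (mem_Ici.mpr ha.le)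
          (mem_Ici.mpr ht) (ne_of_gt ha) (ne_of_gt (lt_trans ha h)) (le_of_lt h)
        rw [hzero] at hsec
        simp only [sub_zero] at hsec
        have ht' : 0 < t := lt_trans ha h
        rw [div_le_div_iff₀ ha ht'] at hsec
        -- f a * t ≤ f t * a
        have : M * t ≤ M * a / f a * f t := by
          rw [div_mul_eq_mul_div, le_div_iff₀ hfa]
          nlinarith
        nlinarith [mul_nonneg hM ha.le]
    refine ⟨4 + M * a + M * a / f a, by positivity, ?_⟩
    intro s hs t ht
    have hfs : 0 ≤ f s := hnonneg _ (mem_Ici.mpr hs)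
    have hft : 0 ≤ f t := hnonneg _ (mem_Ici.mpr ht)
    have hMa : 0 ≤ M * a := mul_nonneg hM ha.le
    have hMafa : 0 ≤ M * a / f a := by positivity
    have hC3 : (3:ℝ) ≤ 4 + M * a + M * a / f a := by linarith
    have hCMa : M * a ≤ 4 + M * a + M * a / f a := by linarith
    have hCMafa : M * a / f a ≤ 4 + M * a + M * a / f a := by linarith
    rcases lt_or_ge s t₀ with hst₀ | hst₀
    · -- small s: f'(s) ≤ M
      have hk := key_le s hs (t₀ + 1) (by linarith)
      have hd : (1:ℝ) ≤ t₀ + 1 - s := by linarith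
      have hfsM : f s ≤ M := hmono (mem_Ici.mpr hs) (mem_Ici.mpr (by linarith)) (by linarith)
      have hf'M : f' s ≤ M := by
        have h1 : (M - f s) / (t₀ + 1 - s) ≤ M - f s :=
          div_le_self (by linarith) hd
        calc f' s ≤ (M - f s) / (t₀ + 1 - s) := hk
          _ ≤ M - f s := h1
          _ ≤ M := by linarith
      have h1 : f' s * t ≤ M * t := mul_le_mul_of_nonneg_right hf'M ht
      have h2 := hlin t ht
      nlinarith [mul_le_mul_of_nonneg_right hCMafa hft]
    · -- large s
      have h2 := h3fs s hst₀
      rcases le_or_gt t s with hts | hts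
      · have h1 : f' s * t ≤ f' s * s := mul_le_mul_of_nonneg_left hts (key_nonneg s hs)
        nlinarith
      · have hk := key_le s hs t hts
        have h1 : f' s * (t - s) ≤ f t - f s := by
          have := (le_div_iff₀ (by linarith : (0:ℝ) < t - s)).mp hk
          linarith
        nlinarith
  · -- degenerate case: f ≡ 0 on [0,∞)
    push_neg at hex
    have hfz : ∀ x, 0 ≤ x → f x = 0 := by
      intro x hx
      rcases eq_or_lt_of_le hx with h | h
      · rw [← h, hzero]
      · exact le_antisymm (hex x h) (hnonneg x (mem_Ici.mpr hx))
    refine ⟨1, one_pos, ?_⟩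
    intro s hs t ht
    have hle := key_le s hs (s + 1) (by linarith)
    rw [hfz s hs, hfz (s + 1) (by linarith)] at hle
    simp at hle
    have h0 : f' s = 0 := le_antisymm hle (key_nonneg s hs)
    rw [h0, hfz s hs, hfz t ht]
    norm_num
end

section
/- For δ > 0 let f_δ(t) = (√(1+δ²t²) - 1)/δ². Then the vortex energy 𝒱(f_δ) = 2∫₀¹ f_δ(1/r)·r dr equals f_δ(1) + arcsinh(1/δ), where arcsinh(t) = log(t + √(1+t²)). In particular 𝒱(f_δ) - log(1/δ) remains bounded as δ → 0. -/
/-- Vortex energy of the rescaled area integrand: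
`𝒱(f_δ) = f_δ(1) + arcsinh(1/δ)`, and `𝒱(f_δ) - log(1/δ)` stays bounded as `δ → 0`. -/
theorem vortex_energy_area (fδ : ℝ → ℝ → ℝ)
    (hf : ∀ δ t : ℝ, fδ δ t = (Real.sqrt (1 + δ ^ 2 * t ^ 2) - 1) / δ ^ 2) :
    (∀ δ > (0:ℝ),
      2 * ∫ r in (0:ℝ)..1, fδ δ (1 / r) * r = fδ δ 1 + Real.arsinh (1 / δ)) ∧
    ∃ C : ℝ, ∀ δ ∈ Set.Ioc (0:ℝ) 1,
      |2 * (∫ r in (0:ℝ)..1, fδ δ (1 / r) * r) - Real.log (1 / δ)| ≤ C := by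
  have key : ∀ δ > (0:ℝ),
      2 * ∫ r in (0:ℝ)..1, fδ δ (1 / r) * r = fδ δ 1 + Real.arsinh (1 / δ) := by
    intro δ hδ
    have hδ2 : (0:ℝ) < δ ^ 2 := by positivity
    set g : ℝ → ℝ := fun r => (Real.sqrt (r ^ 2 + δ ^ 2) - r) / δ ^ 2 with hg
    set F : ℝ → ℝ := fun r =>
      (r * Real.sqrt (r ^ 2 + δ ^ 2) / 2 + δ ^ 2 / 2 * Real.arsinh (r / δ)
        - r ^ 2 / 2) / δ ^ 2 with hFdef
    have hS : ∀ r : ℝ, (0:ℝ) < r ^ 2 + δ ^ 2 := fun r => by positivity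
    have hsqrtpos : ∀ r : ℝ, (0:ℝ) < Real.sqrt (r ^ 2 + δ ^ 2) := fun r =>
      Real.sqrt_pos.2 (hS r)
    have hderiv : ∀ r : ℝ, HasDerivAt F (g r) r := by
      intro r
      have hSr := hS r
      have hsr := hsqrtpos r
      have hsq : HasDerivAt (fun r : ℝ => Real.sqrt (r ^ 2 + δ ^ 2))
          (2 * r / (2 * Real.sqrt (r ^ 2 + δ ^ 2))) r := by
        have h1 : HasDerivAt (fun r : ℝ => r ^ 2 + δ ^ 2) (2 * r) r := by
          simpa using ((hasDerivAt_pow 2 r).add_const (δ ^ 2))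
        exact h1.sqrt hSr.ne'
      have h2 : HasDerivAt (fun r : ℝ => r * Real.sqrt (r ^ 2 + δ ^ 2))
          (1 * Real.sqrt (r ^ 2 + δ ^ 2) + r * (2 * r / (2 * Real.sqrt (r ^ 2 + δ ^ 2)))) r :=
        (hasDerivAt_id r).mul hsq
      have h3 : HasDerivAt (fun r : ℝ => Real.arsinh (r / δ))
          ((Real.sqrt (1 + (r / δ) ^ 2))⁻¹ • (1 / δ)) r := by
        have : HasDerivAt (fun r : ℝ => r / δ) (1 / δ) r := by
          simpa using (hasDerivAt_id r).div_const δ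
        exact this.arsinh
      have h4 : HasDerivAt (fun r : ℝ => r ^ 2 / 2) r r := by
        simpa using (hasDerivAt_pow 2 r).div_const 2
      have h5 := (((h2.div_const 2).add (h3.const_mul (δ ^ 2 / 2))).sub h4).div_const (δ ^ 2)
      refine h5.congr_deriv ?_
      symm
      have hsq1 : Real.sqrt (1 + (r / δ) ^ 2) = Real.sqrt (r ^ 2 + δ ^ 2) / δ := by
        rw [eq_div_iff hδ.ne', ← Real.sqrt_sq hδ.le, ← Real.sqrt_mul (by positivity)]
        congr 1
        field_simp
        linear_combination (-(Real.sqrt (δ ^ 2)) ^ 2 - r ^ 2) * Real.sq_sqrt hδ2.le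
      have hss : Real.sqrt (r ^ 2 + δ ^ 2) * Real.sqrt (r ^ 2 + δ ^ 2) = r ^ 2 + δ ^ 2 :=
        Real.mul_self_sqrt hSr.le
      rw [hg, hsq1, smul_eq_mul]
      field_simp
      linear_combination hss
    have hgc : Continuous g := by
      apply Continuous.div_const
      exact ((Real.continuous_sqrt.comp (by continuity)).sub continuous_id)
    have hint : IntervalIntegrable g MeasureTheory.volume 0 1 := hgc.intervalIntegrable _ _
    have hftc := intervalIntegral.integral_eq_sub_of_hasDerivAt (fun r _ => hderiv r) hint
    have hcongr : ∫ r in (0:ℝ)..1, fδ δ (1 / r) * r = ∫ r in (0:ℝ)..1, g r := by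
      apply intervalIntegral.integral_congr_ae
      filter_upwards with r hr
      rw [Set.uIoc_of_le (by norm_num : (0:ℝ) ≤ 1)] at hr
      have hr0 : 0 < r := hr.1
      rw [hf, hg]
      have : Real.sqrt (1 + δ ^ 2 * (1 / r) ^ 2) * r = Real.sqrt (r ^ 2 + δ ^ 2) := by
        rw [← Real.sqrt_sq hr0.le, ← Real.sqrt_mul (by positivity)]
        congr 1
        field_simp
        rw [Real.sq_sqrt (by positivity)]
      rw [div_mul_eq_mul_div, sub_mul, this, one_mul]
    rw [hcongr, hftc, hFdef]
    simp only [Real.arsinh_zero]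
    rw [hf]
    have h1 : ((1:ℝ)) ^ 2 + δ ^ 2 = 1 + δ ^ 2 * 1 ^ 2 := by ring
    rw [h1]
    field_simp
    rw [zero_div, Real.arsinh_zero]
    ring
  refine ⟨key, ⟨2, ?_⟩⟩
  intro δ hδ
  rw [key δ hδ.1]
  have hδ0 := hδ.1
  have hδ1 := hδ.2
  have hδ2 : (0:ℝ) < δ ^ 2 := by positivity
  have hE : fδ δ 1 = (Real.sqrt (1 + δ ^ 2) - 1) / δ ^ 2 := by rw [hf]; norm_num
  have hs2 : Real.sqrt (1 + (1 / δ) ^ 2) = Real.sqrt (1 + δ ^ 2) / δ := by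
    rw [eq_div_iff hδ0.ne', ← Real.sqrt_sq hδ0.le, ← Real.sqrt_mul (by positivity)]
    congr 1
    field_simp
    linear_combination (-(1 + Real.sqrt (δ ^ 2) ^ 2)) * Real.sq_sqrt hδ2.le
  have hA : Real.arsinh (1 / δ) = Real.log (1 + Real.sqrt (1 + δ ^ 2)) - Real.log δ := by
    rw [Real.arsinh, hs2,
      show 1 / δ + Real.sqrt (1 + δ ^ 2) / δ = (1 + Real.sqrt (1 + δ ^ 2)) / δ by ring,
      Real.log_div (by positivity) hδ0.ne']
  have hL : Real.log (1 / δ) = -Real.log δ := by rw [one_div, Real.log_inv]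
  have h1le : (1:ℝ) ≤ Real.sqrt (1 + δ ^ 2) := by
    have h := Real.sqrt_le_sqrt (show (1:ℝ) ≤ 1 + δ ^ 2 by nlinarith)
    rwa [Real.sqrt_one] at h
  have hfpos : 0 ≤ fδ δ 1 := by
    rw [hE]; apply div_nonneg (by linarith) hδ2.le
  have hub : Real.sqrt (1 + δ ^ 2) ≤ 1 + δ ^ 2 / 2 := by
    have h := Real.sqrt_le_sqrt (show 1 + δ ^ 2 ≤ (1 + δ ^ 2 / 2) ^ 2 by nlinarith)
    rwa [Real.sqrt_sq (by positivity)] at h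
  have hfle : fδ δ 1 ≤ 1 / 2 := by
    rw [hE, div_le_iff₀ hδ2]; nlinarith
  have hLpos : 0 ≤ Real.log (1 + Real.sqrt (1 + δ ^ 2)) := Real.log_nonneg (by linarith)
  have hLle : Real.log (1 + Real.sqrt (1 + δ ^ 2)) ≤ 3 / 2 := by
    have h := Real.log_le_sub_one_of_pos (show (0:ℝ) < 1 + Real.sqrt (1 + δ ^ 2) by linarith)
    have hsq2 : Real.sqrt (1 + δ ^ 2) ≤ 3 / 2 := by
      have h2 := Real.sqrt_le_sqrt (show 1 + δ ^ 2 ≤ ((3:ℝ) / 2) ^ 2 by nlinarith)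
      rwa [Real.sqrt_sq (by norm_num)] at h2
    linarith
  rw [hA, hL, abs_le]
  constructor <;> linarith
end

section
/- Let Ω ⊂ ℝ² be a bounded measurable set and f : ℝ≥0 → ℝ≥0 a Young function with finite vortex energy, i.e. ∫₁^∞ f(s)/s³ ds < ∞. Then for every nonzero measurable m : Ω → [0,∞) with finite weak-L² quasinorm M₂ = ‖m‖_{L^{2,∞}(Ω)}, one has ∫_Ω f(m(x)) dx ≤ 2 M₂² ∫_{M₂/√(ℒ²(Ω))}^∞ f(s)/s³ ds, which is finite. -/
open MeasureTheory
open scoped ENNReal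

/-- Weak-L² bound on the Orlicz energy: if the Young function `f` has finite
vortex energy, then for every nonzero `m` with finite weak-L² quasinorm `M₂`,
`∫_Ω f∘m ≤ 2 M₂² ∫_{M₂/√|Ω|}^∞ f(s)/s³ ds`, which is finite. -/
theorem young_weakL2_bound
    (Ω : Set (EuclideanSpace ℝ (Fin 2))) (hΩmeas : MeasurableSet Ω)
    (hΩfin : volume Ω < ⊤) (hΩpos : 0 < volume Ω)
    (f : ℝ → ℝ)
    (hconv : ConvexOn ℝ (Set.Ici (0:ℝ)) f)
    (hmono : MonotoneOn f (Set.Ici (0:ℝ)))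
    (hzero : f 0 = 0)
    (hnonneg : ∀ x ∈ Set.Ici (0:ℝ), 0 ≤ f x)
    (hvint : IntegrableOn (fun s => f s / s ^ 3) (Set.Ioi (1:ℝ)))
    (m : EuclideanSpace ℝ (Fin 2) → ℝ) (hm : Measurable m)
    (hm0 : ∀ x ∈ Ω, 0 ≤ m x)
    (M₂ : ℝ) (hM₂pos : 0 < M₂)
    (hM₂ : IsLUB {y : ℝ | ∃ t > (0:ℝ),
      y = t ^ 2 * (volume (Ω ∩ {x | t < m x})).toReal} (M₂ ^ 2)) :
    IntegrableOn (fun x => f (m x)) Ω volume ∧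
    ∫ x in Ω, f (m x) ≤
      2 * M₂ ^ 2 *
        ∫ s in Set.Ioi (M₂ / Real.sqrt ((volume Ω).toReal)), f s / s ^ 3 := by
  classical
  set V : ℝ := (volume Ω).toReal with hVdef
  have hV : 0 < V := ENNReal.toReal_pos hΩpos.ne' hΩfin.ne
  set a : ℝ := M₂ / Real.sqrt V with hadef
  have ha : 0 < a := div_pos hM₂pos (Real.sqrt_pos.2 hV)
  have haV : M₂ ^ 2 / a ^ 2 = V := by
    rw [hadef, div_pow, Real.sq_sqrt hV.le]
    field_simp
  -- the monotone extension of f to all of ℝ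
  set F : ℝ → ℝ := fun t => f (max t 0) with hFdef
  have hFmono : Monotone F := fun s t hst =>
    hmono (le_max_right s 0) (le_max_right t 0) (max_le_max hst le_rfl)
  have hFmeas : Measurable F := hFmono.measurable
  have hFnn : ∀ t, 0 ≤ F t := fun t => hnonneg _ (le_max_right t 0)
  have hFeq : ∀ t : ℝ, 0 ≤ t → F t = f t := fun t ht => by
    rw [hFdef]; simp [max_eq_left ht]
  have hF0 : F 0 = 0 := by simpa [hFdef] using hzero
  have hFm : Measurable fun x => F (m x) := hFmeas.comp hm
  -- distribution function bounds
  have hfin : ∀ s : Set (EuclideanSpace ℝ (Fin 2)), volume (Ω ∩ s) ≠ ⊤ :=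
    fun s => (lt_of_le_of_lt (measure_mono Set.inter_subset_left) hΩfin).ne
  have hdist : ∀ t : ℝ, 0 < t →
      volume (Ω ∩ {x | t < m x}) ≤ ENNReal.ofReal (M₂ ^ 2 / t ^ 2) := by
    intro t ht
    have hub : t ^ 2 * (volume (Ω ∩ {x | t < m x})).toReal ≤ M₂ ^ 2 := hM₂.1 ⟨t, ht, rfl⟩
    have h1 : (volume (Ω ∩ {x | t < m x})).toReal ≤ M₂ ^ 2 / t ^ 2 := by
      rw [le_div_iff₀ (by positivity), mul_comm]
      exact hub
    calc volume (Ω ∩ {x | t < m x})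
        = ENNReal.ofReal (volume (Ω ∩ {x | t < m x})).toReal :=
          (ENNReal.ofReal_toReal (hfin _)).symm
      _ ≤ ENNReal.ofReal (M₂ ^ 2 / t ^ 2) := ENNReal.ofReal_le_ofReal h1
  have hclosed : ∀ c : ℝ, 0 < c →
      volume (Ω ∩ {x | c ≤ m x}) ≤ ENNReal.ofReal (M₂ ^ 2 / c ^ 2) := by
    intro c hc
    have htend : Filter.Tendsto (fun t : ℝ => ENNReal.ofReal (M₂ ^ 2 / t ^ 2))
        (nhdsWithin c (Set.Iio c)) (nhds (ENNReal.ofReal (M₂ ^ 2 / c ^ 2))) := by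
      apply Filter.Tendsto.mono_left _ nhdsWithin_le_nhds
      apply (ENNReal.continuous_ofReal.tendsto _).comp
      exact Filter.Tendsto.div tendsto_const_nhds ((continuous_pow 2).tendsto c) (by positivity)
    refine ge_of_tendsto htend ?_
    filter_upwards [Ioo_mem_nhdsLT (half_lt_self hc)] with t ht
    refine le_trans (measure_mono (Set.inter_subset_inter_right _
      (fun x hx => lt_of_lt_of_le ht.2 hx))) (hdist t (lt_trans (half_pos hc) ht.1))
  -- the comparison measure
  set w : ℝ → ℝ≥0∞ := fun s => ENNReal.ofReal (2 * M₂ ^ 2 / s ^ 3) with hwdef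
  have hwmeas : Measurable w :=
    ENNReal.measurable_ofReal.comp (measurable_const.div (measurable_id.pow_const 3))
  set ρ : Measure ℝ := (volume.restrict (Set.Ioi a)).withDensity w with hρdef
  have hρIoi : ∀ c : ℝ, a ≤ c → ρ (Set.Ioi c) = ENNReal.ofReal (M₂ ^ 2 / c ^ 2) := by
    intro c hc
    have hc0 : 0 < c := lt_of_lt_of_le ha hc
    have hrr : ρ (Set.Ioi c) = ∫⁻ s in Set.Ioi c, w s := by
      rw [hρdef, withDensity_apply _ measurableSet_Ioi,
        Measure.restrict_restrict measurableSet_Ioi, Set.Ioi_inter_Ioi, max_eq_left hc]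
    have hint : IntegrableOn (fun s => 2 * M₂ ^ 2 / s ^ 3) (Set.Ioi c) := by
      have h2 : IntegrableOn (fun s : ℝ => 2 * M₂ ^ 2 * s ^ (-3:ℝ)) (Set.Ioi c) :=
        (integrableOn_Ioi_rpow_of_lt (by norm_num : (-3:ℝ) < -1) hc0).const_mul (2 * M₂ ^ 2)
      refine h2.congr_fun (fun s hs => ?_) measurableSet_Ioi
      have hs0 : 0 < s := lt_trans hc0 hs
      dsimp only
      rw [show (-3:ℝ) = -((3:ℕ):ℝ) by norm_num, Real.rpow_neg hs0.le, Real.rpow_natCast]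
      ring
    have hnn : 0 ≤ᵐ[volume.restrict (Set.Ioi c)] fun s => 2 * M₂ ^ 2 / s ^ 3 := by
      refine (ae_restrict_iff' measurableSet_Ioi).2 (Filter.Eventually.of_forall fun s hs => ?_)
      have hs0 : 0 < s := lt_trans hc0 hs
      positivity
    have hval : ∫ s in Set.Ioi c, 2 * M₂ ^ 2 / s ^ 3 = M₂ ^ 2 / c ^ 2 := by
      have hcongr : ∫ s in Set.Ioi c, 2 * M₂ ^ 2 / s ^ 3
          = ∫ s in Set.Ioi c, 2 * M₂ ^ 2 * s ^ (-3:ℝ) := by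
        refine setIntegral_congr_fun measurableSet_Ioi fun s hs => ?_
        have hs0 : 0 < s := lt_trans hc0 hs
        rw [show (-3:ℝ) = -((3:ℕ):ℝ) by norm_num, Real.rpow_neg hs0.le, Real.rpow_natCast]
        ring
      rw [hcongr, MeasureTheory.integral_const_mul,
        integral_Ioi_rpow_of_lt (by norm_num) hc0]
      rw [show (-3:ℝ) + 1 = -((2:ℕ):ℝ) by norm_num, Real.rpow_neg hc0.le, Real.rpow_natCast]
      field_simp
      ring
    rw [hrr, ← hval, ← ofReal_integral_eq_lintegral_ofReal hint hnn]
  -- pointwise comparison of distribution functions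
  have hpt : ∀ u : ℝ, u ∈ Set.Ioi (0:ℝ) →
      (volume.restrict Ω) {x | u < F (m x)} ≤ ρ {s | u < F s} := by
    intro u hu
    rw [Measure.restrict_apply (measurableSet_lt measurable_const hFm)]
    by_cases hbdd : BddAbove {t : ℝ | F t ≤ u}
    · set g := sSup {t : ℝ | F t ≤ u} with hgdef
      have hS0 : (0:ℝ) ∈ {t : ℝ | F t ≤ u} := by
        simp only [Set.mem_setOf_eq, hF0]
        exact le_of_lt hu
      have hg0 : 0 ≤ g := le_csSup hbdd hS0
      have hup : ∀ y : ℝ, u < F y → g ≤ y := by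
        intro y hy
        refine csSup_le ⟨0, hS0⟩ fun t ht => ?_
        by_contra hcon
        push_neg at hcon
        exact absurd (le_trans (hFmono hcon.le) ht) (not_le.2 hy)
      have hlow : Set.Ioi (max a g) ⊆ {s | u < F s} := by
        intro s hs
        by_contra hcon
        simp only [Set.mem_setOf_eq, not_lt] at hcon
        exact absurd (le_csSup hbdd (by exact hcon))
          (not_le.2 (lt_of_le_of_lt (le_max_right a g) hs))
      have hρge : ENNReal.ofReal (M₂ ^ 2 / (max a g) ^ 2) ≤ ρ {s | u < F s} := by
        rw [← hρIoi _ (le_max_left a g)]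
        exact measure_mono hlow
      refine le_trans ?_ hρge
      rcases le_or_gt g a with hga | hag
      · rw [max_eq_left hga, haV]
        calc volume ({x | u < F (m x)} ∩ Ω) ≤ volume Ω :=
              measure_mono Set.inter_subset_right
          _ = ENNReal.ofReal V := (ENNReal.ofReal_toReal hΩfin.ne).symm
      · rw [max_eq_right hag.le]
        refine le_trans (measure_mono ?_) (hclosed g (lt_trans ha hag))
        intro x hx
        exact ⟨hx.2, hup _ hx.1⟩
    · have hempty : {x | u < F (m x)} = ∅ := by
        ext x
        simp only [Set.mem_setOf_eq, Set.mem_empty_iff_false, iff_false, not_lt]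
        obtain ⟨t, ht, hmt⟩ := not_bddAbove_iff.1 hbdd (m x)
        exact le_trans (hFmono hmt.le) ht
      simp [hempty]
  -- layer cake on both sides
  have hLHS := lintegral_eq_lintegral_meas_lt (volume.restrict Ω)
    (Filter.Eventually.of_forall fun x => hFnn (m x)) hFm.aemeasurable
  have hRHS := lintegral_eq_lintegral_meas_lt ρ
    (Filter.Eventually.of_forall fun s => hFnn s) hFmeas.aemeasurable
  have hmain : ∫⁻ x, ENNReal.ofReal (F (m x)) ∂(volume.restrict Ω) ≤
      ∫⁻ s, ENNReal.ofReal (F s) ∂ρ := by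
    rw [hLHS, hRHS]
    exact lintegral_mono_ae ((ae_restrict_iff' measurableSet_Ioi).2
      (Filter.Eventually.of_forall hpt))
  have hρint : ∫⁻ s, ENNReal.ofReal (F s) ∂ρ
      = ∫⁻ s in Set.Ioi a, w s * ENNReal.ofReal (F s) := by
    rw [hρdef, lintegral_withDensity_eq_lintegral_mul _ hwmeas
      (g := fun s => ENNReal.ofReal (F s)) hFmeas.ennreal_ofReal]
    rfl
  -- integrability of the comparison integrand
  have hIbase : IntegrableOn (fun s => F s / s ^ 3) (Set.Ioi a) := by
    rcases le_or_gt 1 a with h1a | ha1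
    · refine (hvint.mono_set fun s hs => lt_of_le_of_lt h1a hs).congr_fun
        (fun s hs => ?_) measurableSet_Ioi
      rw [hFeq s (le_of_lt (lt_of_lt_of_le ha (le_of_lt hs)))]
    · rw [← Set.Ioc_union_Ioi_eq_Ioi ha1.le]
      refine IntegrableOn.union ?_ ?_
      · refine Measure.integrableOn_of_bounded (M := F 1 / a ^ 3) measure_Ioc_lt_top.ne
          ((hFmeas.div (measurable_id.pow_const 3)).aestronglyMeasurable) ?_
        refine (ae_restrict_iff' measurableSet_Ioc).2 (Filter.Eventually.of_forall fun s hs => ?_)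
        have hs0 : 0 < s := lt_trans ha hs.1
        rw [Real.norm_of_nonneg (div_nonneg (hFnn s) (by positivity))]
        exact div_le_div₀ (hFnn 1) (hFmono hs.2) (by positivity)
          (pow_le_pow_left₀ ha.le hs.1.le 3)
      · refine hvint.congr_fun (fun s hs => ?_) measurableSet_Ioi
        rw [hFeq s (le_of_lt (lt_trans zero_lt_one hs))]
  have hI : IntegrableOn (fun s => 2 * M₂ ^ 2 / s ^ 3 * F s) (Set.Ioi a) := by
    have h3 : IntegrableOn (fun s : ℝ => 2 * M₂ ^ 2 * (F s / s ^ 3)) (Set.Ioi a) :=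
      hIbase.const_mul (2 * M₂ ^ 2)
    exact h3.congr_fun (fun s hs => by ring) measurableSet_Ioi
  have hInn : 0 ≤ᵐ[volume.restrict (Set.Ioi a)] fun s => 2 * M₂ ^ 2 / s ^ 3 * F s := by
    refine (ae_restrict_iff' measurableSet_Ioi).2 (Filter.Eventually.of_forall fun s hs => ?_)
    have hs0 : 0 < s := lt_trans ha hs
    exact mul_nonneg (by positivity) (hFnn s)
  set R : ℝ := ∫ s in Set.Ioi a, 2 * M₂ ^ 2 / s ^ 3 * F s with hRdef
  have hconv2 : ∫⁻ s in Set.Ioi a, w s * ENNReal.ofReal (F s) = ENNReal.ofReal R := by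
    rw [hRdef, ofReal_integral_eq_lintegral_ofReal hI hInn]
    refine setLIntegral_congr_fun measurableSet_Ioi (fun s hs => ?_)
    have hs0 : 0 < s := lt_trans ha hs
    rw [hwdef, ← ENNReal.ofReal_mul (by positivity)]
  have hRnn : 0 ≤ R := by
    rw [hRdef]
    refine setIntegral_nonneg measurableSet_Ioi fun s hs => ?_
    have hs0 : 0 < s := lt_trans ha hs
    exact mul_nonneg (by positivity) (hFnn s)
  have hEle : ∫⁻ x, ENNReal.ofReal (F (m x)) ∂(volume.restrict Ω) ≤ ENNReal.ofReal R := by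
    calc ∫⁻ x, ENNReal.ofReal (F (m x)) ∂(volume.restrict Ω)
        ≤ ∫⁻ s, ENNReal.ofReal (F s) ∂ρ := hmain
      _ = ENNReal.ofReal R := by rw [hρint, hconv2]
  have hFint : Integrable (fun x => F (m x)) (volume.restrict Ω) := by
    refine ⟨hFm.aestronglyMeasurable, ?_⟩
    rw [hasFiniteIntegral_iff_ofReal (Filter.Eventually.of_forall fun x => hFnn (m x))]
    exact lt_of_le_of_lt hEle ENNReal.ofReal_lt_top
  have haeeq : ∀ᵐ x ∂(volume.restrict Ω), f (m x) = F (m x) :=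
    (ae_restrict_iff' hΩmeas).2 (Filter.Eventually.of_forall fun x hx =>
      (hFeq (m x) (hm0 x hx)).symm)
  have hRfin : R = 2 * M₂ ^ 2 * ∫ s in Set.Ioi a, f s / s ^ 3 := by
    rw [hRdef, ← MeasureTheory.integral_const_mul]
    refine setIntegral_congr_fun measurableSet_Ioi fun s hs => ?_
    rw [hFeq s (le_of_lt (lt_trans ha hs))]
    ring
  constructor
  · exact hFint.congr (haeeq.mono fun x hx => hx.symm)
  · have hint_eq : ∫ x in Ω, f (m x) = ∫ x in Ω, F (m x) := integral_congr_ae haeeq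
    have hFval : ∫ x in Ω, F (m x)
        = (∫⁻ x, ENNReal.ofReal (F (m x)) ∂(volume.restrict Ω)).toReal :=
      integral_eq_lintegral_of_nonneg_ae (Filter.Eventually.of_forall fun x => hFnn (m x))
        hFm.aestronglyMeasurable
    calc ∫ x in Ω, f (m x)
        = (∫⁻ x, ENNReal.ofReal (F (m x)) ∂(volume.restrict Ω)).toReal := by
          rw [hint_eq, hFval]
      _ ≤ (ENNReal.ofReal R).toReal := ENNReal.toReal_mono ENNReal.ofReal_ne_top hEle
      _ = R := ENNReal.toReal_ofReal hRnn
      _ = 2 * M₂ ^ 2 * ∫ s in Set.Ioi a, f s / s ^ 3 := hRfin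
end

section
/- Let f : ℝ≥0 → ℝ≥0 be a Young function with finite vortex energy, let c₀ > 0, and define Λ(t) = 2c₀² ∫₀^t f(1/(c₀ s))·s ds. Then for every 0 ≤ ρ < σ, the function E ↦ E·(Λ(σ/E) - Λ(ρ/E)) is non-decreasing in E > 0. -/
open MeasureTheory Set

/-- Convexity with `f 0 = 0` gives `b * f (a*x) ≤ a * f (b*x)` for `0 < a ≤ b`, `0 ≤ x`. -/
lemma young_scaling_aux {f : ℝ → ℝ} (hconv : ConvexOn ℝ (Set.Ici (0:ℝ)) f)
    (hzero : f 0 = 0) {x a b : ℝ} (hx : 0 ≤ x) (ha : 0 < a) (hab : a ≤ b) :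
    b * f (a * x) ≤ a * f (b * x) := by
  have hb : 0 < b := lt_of_lt_of_le ha hab
  have h1 : 0 ≤ 1 - a / b := by
    have : a / b ≤ 1 := (div_le_one hb).mpr hab
    linarith
  have h2 : 0 ≤ a / b := by positivity
  have h3 : (1 - a / b) + a / b = 1 := by ring
  have hmem0 : (0:ℝ) ∈ Set.Ici (0:ℝ) := Set.mem_Ici.mpr le_rfl
  have hmembx : b * x ∈ Set.Ici (0:ℝ) := Set.mem_Ici.mpr (by positivity)
  have := hconv.2 hmem0 hmembx h1 h2 h3
  simp only [smul_eq_mul, mul_zero, zero_add, hzero] at this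
  have harg : a / b * (b * x) = a * x := by field_simp
  rw [harg] at this
  have := mul_le_mul_of_nonneg_left this hb.le
  calc b * f (a * x) ≤ b * (a / b * f (b * x)) := this
    _ = a * f (b * x) := by field_simp

/-- Finite vortex energy gives integrability of `s ↦ f(1/(c₀ s)) s` near `0`. -/
lemma vortex_integrable_aux {f : ℝ → ℝ} {c₀ : ℝ} (hc₀ : 0 < c₀)
    (hmono : MonotoneOn f (Set.Ici (0:ℝ)))
    (hvint : IntegrableOn (fun s => f s / s ^ 3) (Set.Ioi (1:ℝ))) (t : ℝ) :
    IntegrableOn (fun s => f (1 / (c₀ * s)) * s) (Set.Ioc 0 t) := by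
  rcases le_or_gt t 0 with ht | ht
  · rw [Set.Ioc_eq_empty (by exact fun h => absurd ht (not_le.mpr h))]
    exact integrableOn_empty
  · set b : ℝ := max 1 (1 / (c₀ * t)) with hbdef
    have hb1 : (1:ℝ) ≤ b := le_max_left _ _
    have hb0 : (0:ℝ) < b := lt_of_lt_of_le one_pos hb1
    set δ : ℝ := 1 / (c₀ * b) with hδdef
    have hδ0 : 0 < δ := by positivity
    have hδt : δ ≤ t := by
      rw [hδdef, div_le_iff₀ (by positivity)]
      have h2 : 1 / (c₀ * t) ≤ b := le_max_right _ _
      rw [div_le_iff₀ (by positivity)] at h2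
      nlinarith
    -- substitution part on Ioo 0 δ
    have hderiv : ∀ u ∈ Set.Ioi b, HasDerivWithinAt (fun u : ℝ => 1 / (c₀ * u))
        (-(1 / (c₀ * u ^ 2))) (Set.Ioi b) u := by
      intro u hu
      have hu0 : 0 < u := lt_trans hb0 hu
      have h : HasDerivAt (fun u : ℝ => (c₀ * u)⁻¹) (-(c₀ * 1) / (c₀ * u) ^ 2) u :=
        ((hasDerivAt_id u).const_mul c₀).inv (by positivity)
      have h' : HasDerivAt (fun u : ℝ => 1 / (c₀ * u)) (-(1 / (c₀ * u ^ 2))) u := by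
        simp only [one_div]
        convert h using 1
        field_simp
      exact h'.hasDerivWithinAt
    have hinj : Set.InjOn (fun u : ℝ => 1 / (c₀ * u)) (Set.Ioi b) := by
      intro x hx y hy hxy
      have hx0 : 0 < x := lt_trans hb0 hx
      have hy0 : 0 < y := lt_trans hb0 hy
      field_simp at hxy
      linarith
    have himg : (fun u : ℝ => 1 / (c₀ * u)) '' Set.Ioi b = Set.Ioo 0 δ := by
      ext y
      constructor
      · rintro ⟨u, hu, rfl⟩
        have hu0 : 0 < u := lt_trans hb0 hu
        refine ⟨by positivity, ?_⟩
        rw [hδdef]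
        apply one_div_lt_one_div_of_lt (by positivity)
        exact mul_lt_mul_of_pos_left hu hc₀
      · rintro ⟨hy0, hyδ⟩
        refine ⟨1 / (c₀ * y), ?_, ?_⟩
        · rw [Set.mem_Ioi]
          rw [hδdef] at hyδ
          rw [lt_div_iff₀ (by positivity)]
          rw [lt_div_iff₀ (by positivity)] at hyδ
          nlinarith
        · field_simp
    have key := integrableOn_image_iff_integrableOn_abs_deriv_smul measurableSet_Ioi hderiv hinj
      (fun s => f (1 / (c₀ * s)) * s)
    rw [himg] at key
    have hrhs : IntegrableOn (fun u : ℝ =>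
        |(-(1 / (c₀ * u ^ 2)))| • (f (1 / (c₀ * (1 / (c₀ * u)))) * (1 / (c₀ * u)))) (Set.Ioi b) := by
      have h1 : IntegrableOn (fun u : ℝ => (1 / c₀ ^ 2) * (f u / u ^ 3)) (Set.Ioi b) :=
        (hvint.mono_set (Set.Ioi_subset_Ioi hb1)).const_mul _
      apply h1.congr_fun _ measurableSet_Ioi
      intro u hu
      have hu0 : 0 < u := lt_trans hb0 hu
      have harg : 1 / (c₀ * (1 / (c₀ * u))) = u := by field_simp
      simp only [harg, smul_eq_mul, abs_neg, abs_of_nonneg (show (0:ℝ) ≤ 1 / (c₀ * u ^ 2) by positivity)]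
      field_simp
    have hIoo : IntegrableOn (fun s => f (1 / (c₀ * s)) * s) (Set.Ioo 0 δ) := key.mpr hrhs
    -- part on [δ, t] : antitone times continuous
    have hanti : AntitoneOn (fun s : ℝ => f (1 / (c₀ * s))) (Set.uIcc δ t) := by
      rw [Set.uIcc_of_le hδt]
      intro x hx y hy hxy
      have hx0 : 0 < x := lt_of_lt_of_le hδ0 hx.1
      have hy0 : 0 < y := lt_of_lt_of_le hδ0 hy.1
      apply hmono (Set.mem_Ici.mpr (by positivity)) (Set.mem_Ici.mpr (by positivity))
      apply one_div_le_one_div_of_le (by positivity)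
      exact mul_le_mul_of_nonneg_left hxy hc₀.le
    have hIcc : IntegrableOn (fun s => f (1 / (c₀ * s)) * s) (Set.Icc δ t) := by
      have := (hanti.intervalIntegrable (μ := volume)).mul_continuousOn (g := fun s : ℝ => s)
        continuousOn_id
      exact (intervalIntegrable_iff_integrableOn_Icc_of_le hδt).mp this
    have hsub : Set.Ioc 0 t ⊆ Set.Ioo 0 δ ∪ Set.Icc δ t := by
      intro s hs
      rcases lt_or_ge s δ with h | h
      · exact Or.inl ⟨hs.1, h⟩
      · exact Or.inr ⟨h, hs.2⟩
    exact (hIoo.union hIcc).mono_set hsub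

/-- Mean value property of `Λ`: for a Young function `f` with finite vortex
energy and `Λ(t) = 2c₀² ∫₀ᵗ f(1/(c₀ s)) s ds`, the map
`E ↦ E·(Λ(σ/E) - Λ(ρ/E))` is non-decreasing in `E > 0` whenever `0 ≤ ρ < σ`. -/
theorem lambda_mean_value_property (f : ℝ → ℝ) (c₀ : ℝ) (hc₀ : 0 < c₀)
    (hconv : ConvexOn ℝ (Set.Ici (0:ℝ)) f)
    (hmono : MonotoneOn f (Set.Ici (0:ℝ)))
    (hzero : f 0 = 0)
    (hnonneg : ∀ x ∈ Set.Ici (0:ℝ), 0 ≤ f x)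
    (hvint : IntegrableOn (fun s => f s / s ^ 3) (Set.Ioi (1:ℝ)))
    (Λ : ℝ → ℝ)
    (hΛ : ∀ t : ℝ, Λ t = 2 * c₀ ^ 2 * ∫ s in (0:ℝ)..t, f (1 / (c₀ * s)) * s) :
    ∀ ρ σ : ℝ, 0 ≤ ρ → ρ < σ →
      MonotoneOn (fun E => E * (Λ (σ / E) - Λ (ρ / E))) (Set.Ioi (0:ℝ)) := by
  intro ρ σ hρ hρσ
  have hσ : 0 < σ := lt_of_le_of_lt hρ hρσ
  have hI : ∀ t : ℝ, 0 ≤ t → IntervalIntegrable (fun s => f (1 / (c₀ * s)) * s) volume 0 t :=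
    fun t ht => (intervalIntegrable_iff_integrableOn_Ioc_of_le ht).mpr
      (vortex_integrable_aux hc₀ hmono hvint t)
  -- key identity
  have key : ∀ E : ℝ, 0 < E →
      E * (Λ (σ / E) - Λ (ρ / E)) = 2 * c₀ ^ 2 * ∫ u in ρ..σ, f (E / (c₀ * u)) * (u / E) := by
    intro E hE
    have hρE : 0 ≤ ρ / E := div_nonneg hρ hE.le
    have hσE : 0 ≤ σ / E := div_nonneg hσ.le hE.le
    rw [hΛ, hΛ, ← mul_sub,
      intervalIntegral.integral_interval_sub_left (hI _ hσE) (hI _ hρE)]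
    have hfun : (fun u : ℝ => f (E / (c₀ * u)) * (u / E))
        = fun u : ℝ => f (1 / (c₀ * (u / E))) * (u / E) := by
      funext u
      congr 2
      rw [mul_div_assoc', one_div_div]
    rw [hfun, intervalIntegral.integral_comp_div (fun s => f (1 / (c₀ * s)) * s) hE.ne']
    rw [smul_eq_mul]
    ring
  -- integrability of the transformed integrand
  have hint : ∀ E : ℝ, 0 < E →
      IntervalIntegrable (fun u => f (E / (c₀ * u)) * (u / E)) volume ρ σ := by
    intro E hE
    have hρE : 0 ≤ ρ / E := div_nonneg hρ hE.le
    have hσE : 0 ≤ σ / E := div_nonneg hσ.le hE.le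
    have hg : IntervalIntegrable (fun s => f (1 / (c₀ * s)) * s) volume (ρ / E) (σ / E) :=
      (hI _ hρE).symm.trans (hI _ hσE)
    have h2 := hg.comp_mul_left (c := E⁻¹)
    have he1 : ρ / E / E⁻¹ = ρ := by field_simp
    have he2 : σ / E / E⁻¹ = σ := by field_simp
    rw [he1, he2] at h2
    have hfun : (fun x : ℝ => f (1 / (c₀ * (E⁻¹ * x))) * (E⁻¹ * x))
        = fun u : ℝ => f (E / (c₀ * u)) * (u / E) := by
      funext x
      have h3 : 1 / (c₀ * (E⁻¹ * x)) = E / (c₀ * x) := by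
        rw [inv_mul_eq_div, mul_div_assoc', one_div_div]
      rw [h3, inv_mul_eq_div]
    rwa [hfun] at h2
  intro E₁ hE₁ E₂ hE₂ h12
  simp only [Set.mem_Ioi] at hE₁ hE₂
  simp only
  rw [key E₁ hE₁, key E₂ hE₂]
  apply mul_le_mul_of_nonneg_left _ (by positivity)
  apply intervalIntegral.integral_mono_on hρσ.le (hint E₁ hE₁) (hint E₂ hE₂)
  intro u hu
  have hu0 : 0 ≤ u := le_trans hρ hu.1
  rcases eq_or_lt_of_le hu0 with h | h
  · simp [← h]
  · have hx : (0:ℝ) < (c₀ * u)⁻¹ := by positivity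
    have hkey := young_scaling_aux hconv hzero hx.le hE₁ h12
    have h1 : E₁ / (c₀ * u) = E₁ * (c₀ * u)⁻¹ := div_eq_mul_inv _ _
    have h2 : E₂ / (c₀ * u) = E₂ * (c₀ * u)⁻¹ := div_eq_mul_inv _ _
    rw [h1, h2, mul_div_assoc', mul_div_assoc', div_le_div_iff₀ hE₁ hE₂]
    nlinarith [mul_le_mul_of_nonneg_right hkey hu0]
end

section
/- Let f be a Young function, c₀ > 0 and Λ(t) = 2c₀²∫₀^t f(1/(c₀s))·s ds. Suppose positive numbers (σᵢ)ᵢ₌₁ᵏ, (Eᵢ)ᵢ₌₁ᵏ, numbers E_Σ with 0 < E_Σ ≤ Σᵢ Eᵢ, σ_Σ = Σᵢ σᵢ, and a parameter T > 0 satisfy σᵢ ≤ Eᵢ·T for all i and σ_Σ ≥ E_Σ·T. Then Σᵢ Eᵢ·Λ(σᵢ/Eᵢ) ≥ E_Σ·Λ(σ_Σ/E_Σ). -/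
open MeasureTheory

/-- Merging energy bound: under the radius/energy inequalities with parameter `T`,
`Σᵢ Eᵢ Λ(σᵢ/Eᵢ) ≥ Esum Λ(σsum/Esum)`. -/
theorem merging_energy_bound (f : ℝ → ℝ) (c₀ : ℝ) (hc₀ : 0 < c₀)
    (hconv : ConvexOn ℝ (Set.Ici (0:ℝ)) f)
    (hmono : MonotoneOn f (Set.Ici (0:ℝ)))
    (hzero : f 0 = 0)
    (hnonneg : ∀ x ∈ Set.Ici (0:ℝ), 0 ≤ f x)
    (hvint : IntegrableOn (fun s => f s / s ^ 3) (Set.Ioi (1:ℝ)))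
    (Λ : ℝ → ℝ)
    (hΛ : ∀ t : ℝ, Λ t = 2 * c₀ ^ 2 * ∫ s in (0:ℝ)..t, f (1 / (c₀ * s)) * s)
    (k : ℕ) (σ E : Fin k → ℝ)
    (hσ : ∀ i, 0 < σ i) (hE : ∀ i, 0 < E i)
    (Esum : ℝ) (hEsumpos : 0 < Esum) (hEsumle : Esum ≤ ∑ i, E i)
    (T : ℝ) (hT : 0 < T)
    (hσi : ∀ i, σ i ≤ E i * T)
    (hssum : (∑ i, σ i) ≥ Esum * T) :
    ∑ i, E i * Λ (σ i / E i) ≥ Esum * Λ ((∑ i, σ i) / Esum) := by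
  set h : ℝ → ℝ := fun s => f (1 / (c₀ * s)) * s with hh
  -- slope inequality from convexity: x * f y ≤ y * f x for 0 < y ≤ x
  have key : ∀ x y : ℝ, 0 < y → y ≤ x → x * f y ≤ y * f x := by
    intro x y hy hyx
    have hx : 0 < x := lt_of_lt_of_le hy hyx
    have h1 : (0:ℝ) ≤ y / x := by positivity
    have h2 : (0:ℝ) ≤ 1 - y / x := by
      have : y / x ≤ 1 := by rw [div_le_one hx]; exact hyx
      linarith
    have h3 := hconv.2 (Set.mem_Ici.2 hx.le) (Set.mem_Ici.2 (le_refl (0:ℝ))) h1 h2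
      (by ring)
    simp only [smul_eq_mul, mul_zero, add_zero, hzero] at h3
    rw [div_mul_cancel₀ _ hx.ne'] at h3
    -- h3 : f y ≤ y / x * f x + (1 - y/x) * 0
    have h4 : f y ≤ y / x * f x := by linarith [h3]
    have h5 : x * f y ≤ x * (y / x * f x) := mul_le_mul_of_nonneg_left h4 hx.le
    have h6 : x * (y / x * f x) = y * f x := by field_simp
    linarith
  -- h is nonnegative on [0, ∞)
  have hpos : ∀ s : ℝ, 0 ≤ s → 0 ≤ h s := by
    intro s hs
    exact mul_nonneg (hnonneg _ (Set.mem_Ici.2 (by positivity))) hs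
  -- h is antitone on (0, ∞)
  have hanti : ∀ s t : ℝ, 0 < s → s ≤ t → h t ≤ h s := by
    intro s t hs hst
    have ht : 0 < t := hs.trans_le hst
    have hy : 0 < 1 / (c₀ * t) := by positivity
    have hyx : 1 / (c₀ * t) ≤ 1 / (c₀ * s) := by
      apply one_div_le_one_div_of_le (by positivity)
      nlinarith
    have h1 := key _ _ hy hyx
    have h2 := mul_le_mul_of_nonneg_left h1 (show (0:ℝ) ≤ c₀ * s * t by positivity)
    have e1 : c₀ * s * t * (1 / (c₀ * s) * f (1 / (c₀ * t))) = t * f (1 / (c₀ * t)) := by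
      field_simp
    have e2 : c₀ * s * t * (1 / (c₀ * t) * f (1 / (c₀ * s))) = s * f (1 / (c₀ * s)) := by
      field_simp
    rw [e1, e2] at h2
    simp only [hh]
    linarith
  -- integrability of h on (0, t]
  have hint : ∀ t : ℝ, 0 < t → IntegrableOn h (Set.Ioc 0 t) := by
    intro t ht
    set A : ℝ := max 1 (1 / (c₀ * t)) with hA
    have hA1 : (1:ℝ) ≤ A := le_max_left _ _
    have hA0 : 0 < A := lt_of_lt_of_le one_pos hA1
    set B : ℝ := 1 / (c₀ * A) with hB
    have hB0 : 0 < B := by positivity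
    have hBt : B ≤ t := by
      rw [hB, div_le_iff₀ (by positivity)]
      have h1 : 1 / (c₀ * t) ≤ A := le_max_right _ _
      rw [div_le_iff₀ (by positivity)] at h1
      nlinarith
    -- change of variables u ↦ (c₀ u)⁻¹ mapping (A, ∞) onto (0, B)
    have hderiv : ∀ u ∈ Set.Ioi A, HasDerivWithinAt (fun u : ℝ => (c₀ * u)⁻¹)
        (-c₀ / (c₀ * u) ^ 2) (Set.Ioi A) u := by
      intro u hu
      have hu0 : c₀ * u ≠ 0 := by
        have : 0 < u := hA0.trans hu
        positivity
      have h1 : HasDerivAt (fun u : ℝ => c₀ * u) c₀ u := by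
        simpa using (hasDerivAt_id u).const_mul c₀
      exact (h1.inv hu0).hasDerivWithinAt
    have hinj : Set.InjOn (fun u : ℝ => (c₀ * u)⁻¹) (Set.Ioi A) := by
      intro x hx y hy hxy
      simp only at hxy
      exact mul_left_cancel₀ hc₀.ne' (inv_injective hxy)
    have himg : (fun u : ℝ => (c₀ * u)⁻¹) '' Set.Ioi A = Set.Ioo 0 B := by
      ext x
      constructor
      · rintro ⟨u, hu, rfl⟩
        have hu0 : 0 < u := hA0.trans hu
        constructor
        · positivity
        · rw [hB]
          rw [div_eq_inv_mul, mul_one]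
          apply inv_strictAnti₀ (by positivity)
          nlinarith [Set.mem_Ioi.1 hu]
      · rintro ⟨hx0, hxB⟩
        refine ⟨1 / (c₀ * x), ?_, ?_⟩
        · rw [Set.mem_Ioi]
          rw [hB] at hxB
          have h1 : x * (c₀ * A) < 1 := by
            rw [lt_div_iff₀ (by positivity)] at hxB
            linarith
          rw [lt_div_iff₀ (by positivity)]
          nlinarith
        · field_simp
      -- end himg
    have hiff := integrableOn_image_iff_integrableOn_abs_deriv_smul measurableSet_Ioi
      hderiv hinj h
    rw [himg] at hiff
    have hrhs : IntegrableOn (fun u : ℝ => |(-c₀ / (c₀ * u) ^ 2)| • h ((c₀ * u)⁻¹))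
        (Set.Ioi A) := by
      have hbase : IntegrableOn (fun u : ℝ => (c₀ ^ 2)⁻¹ * (f u / u ^ 3)) (Set.Ioi A) :=
        (hvint.mono_set (Set.Ioi_subset_Ioi hA1)).const_mul _
      apply hbase.congr_fun _ measurableSet_Ioi
      intro u hu
      have hu0 : 0 < u := hA0.trans hu
      have hfu := hnonneg u (Set.mem_Ici.2 hu0.le)
      simp only [hh, smul_eq_mul]
      have e1 : (1 : ℝ) / (c₀ * (c₀ * u)⁻¹) = u := by field_simp
      rw [e1]
      have e2 : |(-c₀ / (c₀ * u) ^ 2)| = c₀ / (c₀ * u) ^ 2 := by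
        rw [abs_div, abs_neg, abs_of_nonneg hc₀.le, abs_of_nonneg (sq_nonneg _)]
      rw [e2]
      field_simp
    have hIoo : IntegrableOn h (Set.Ioo 0 B) := hiff.mpr hrhs
    have hIcc : IntegrableOn h (Set.Icc B t) := by
      rw [← Set.uIcc_of_le hBt]
      have hanti' : AntitoneOn h (Set.uIcc B t) := by
        rw [Set.uIcc_of_le hBt]
        intro x hx y hy hxy
        exact hanti x y (hB0.trans_le hx.1) hxy
      have := hanti'.intervalIntegrable (μ := volume)
      rw [intervalIntegrable_iff] at this
      rw [Set.uIcc_of_le hBt]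
      rw [Set.uIoc_of_le hBt] at this
      exact (integrableOn_Icc_iff_integrableOn_Ioc).mpr this
    apply (hIoo.union hIcc).mono_set
    intro x hx
    rcases lt_or_ge x B with hc | hc
    · exact Or.inl ⟨hx.1, hc⟩
    · exact Or.inr ⟨hc, hx.2⟩
  -- interval integrability helpers
  have hII0 : ∀ t : ℝ, 0 < t → IntervalIntegrable h volume 0 t := by
    intro t ht
    rw [intervalIntegrable_iff, Set.uIoc_of_le ht.le]
    exact hint t ht
  have hIIab : ∀ a b : ℝ, 0 < a → a ≤ b → IntervalIntegrable h volume a b := by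
    intro a b ha hab
    rw [intervalIntegrable_iff, Set.uIoc_of_le hab]
    exact (hint b (ha.trans_le hab)).mono_set (Set.Ioc_subset_Ioc_left ha.le)
  -- key monotonicity: b * Λ a ≥ a * Λ b for 0 < a ≤ b
  have hkey : ∀ a b : ℝ, 0 < a → a ≤ b → a * Λ b ≤ b * Λ a := by
    intro a b ha hab
    have hb : 0 < b := ha.trans_le hab
    have h0a := hII0 a ha
    have h0b := hII0 b hb
    have hab' := hIIab a b ha hab
    have hsplit := intervalIntegral.integral_add_adjacent_intervals h0a hab'
    set Ia := ∫ s in (0:ℝ)..a, h s with hIa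
    set J := ∫ s in a..b, h s with hJ
    have hha : 0 ≤ h a := hpos a ha.le
    have E1 : a * h a ≤ Ia := by
      rw [hIa, intervalIntegral.integral_of_le ha.le]
      have h1 : ∫ _ in Set.Ioc (0:ℝ) a, h a ∂volume ≤ ∫ s in Set.Ioc (0:ℝ) a, h s ∂volume := by
        apply setIntegral_mono_on (integrableOn_const (by simp))
          (hint a ha) measurableSet_Ioc
        intro s hs
        exact hanti s a hs.1 hs.2
      rw [setIntegral_const, Real.volume_real_Ioc_of_le ha.le, sub_zero,
        smul_eq_mul] at h1
      exact h1
    have E2 : J ≤ (b - a) * h a := by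
      rw [hJ, intervalIntegral.integral_of_le hab]
      have h1 : ∫ s in Set.Ioc a b, h s ∂volume ≤ ∫ _ in Set.Ioc a b, h a ∂volume := by
        apply setIntegral_mono_on ((hint b hb).mono_set (Set.Ioc_subset_Ioc_left ha.le))
          (integrableOn_const (by simp)) measurableSet_Ioc
        intro s hs
        exact hanti a s ha hs.1.le
      rw [setIntegral_const, Real.volume_real_Ioc_of_le hab,
        smul_eq_mul] at h1
      exact h1
    -- b * Ia ≥ a * Ib
    have hg : a * (∫ s in (0:ℝ)..b, h s) ≤ b * Ia := by
      rw [← hsplit]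
      nlinarith [mul_le_mul_of_nonneg_left E1 (sub_nonneg.2 hab),
        mul_le_mul_of_nonneg_left E2 ha.le]
    rw [hΛ a, hΛ b]
    nlinarith [mul_le_mul_of_nonneg_left hg (show (0:ℝ) ≤ 2 * c₀ ^ 2 by positivity)]
  -- assemble
  have hσsum : 0 < ∑ i, σ i := lt_of_lt_of_le (by positivity) hssum
  set S : ℝ := (∑ i, σ i) / Esum with hSdef
  have hS : 0 < S := div_pos hσsum hEsumpos
  have hTS : T ≤ S := by
    rw [hSdef, le_div_iff₀ hEsumpos]
    nlinarith [hssum]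
  have hstep : ∀ i, σ i * (Λ S / S) ≤ E i * Λ (σ i / E i) := by
    intro i
    have hai : 0 < σ i / E i := div_pos (hσ i) (hE i)
    have haiT : σ i / E i ≤ T := by
      rw [div_le_iff₀ (hE i)]
      nlinarith [hσi i]
    have haiS : σ i / E i ≤ S := haiT.trans hTS
    have key2 := hkey _ _ hai haiS
    have eA : E i * (σ i / E i * Λ S) = σ i * Λ S := by
      field_simp
      rw [mul_assoc]; exact mul_div_cancel_left₀ _ (hE i).ne'
    have eC : E i * (S * Λ (σ i / E i)) / S = E i * Λ (σ i / E i) := by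
      field_simp
    calc σ i * (Λ S / S) = E i * (σ i / E i * Λ S) / S := by
          rw [eA, mul_div_assoc]
      _ ≤ E i * (S * Λ (σ i / E i)) / S :=
          div_le_div_of_nonneg_right (mul_le_mul_of_nonneg_left key2 (hE i).le) hS.le
      _ = E i * Λ (σ i / E i) := eC
  rw [ge_iff_le]
  have eS : (∑ i, σ i) = Esum * S := by
    rw [hSdef, mul_div_cancel₀ _ hEsumpos.ne']
  calc Esum * Λ S = (∑ i, σ i) * (Λ S / S) := by
        rw [eS]
        field_simp
    _ ≤ ∑ i, E i * Λ (σ i / E i) := by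
        rw [Finset.sum_mul]
        exact Finset.sum_le_sum fun i _ => hstep i
end

section
/- Given any finite collection 𝓑 of closed balls in ℝ², there exists a finite pairwise-disjoint collection 𝓑' of closed balls such that ⋃𝓑 ⊆ ⋃𝓑', the sum of radii of 𝓑' equals the sum of radii of 𝓑, and each ball of 𝓑' contains a subfamily of balls of 𝓑 whose radii sum to its radius. -/
open Metric

variable {E : Type*} [NormedAddCommGroup E] [NormedSpace ℝ E]

lemma merged_subset
    (a₁ a₂ : E) (σ₁ σ₂ : ℝ) (h₁ : 0 ≤ σ₁) (h₂ : 0 ≤ σ₂)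
    (hd : dist a₁ a₂ ≤ σ₁ + σ₂) :
    closedBall a₁ σ₁ ⊆ closedBall (a₁ + (σ₂ / (σ₁ + σ₂)) • (a₂ - a₁)) (σ₁ + σ₂) ∧
    closedBall a₂ σ₂ ⊆ closedBall (a₁ + (σ₂ / (σ₁ + σ₂)) • (a₂ - a₁)) (σ₁ + σ₂) := by
  rcases eq_or_lt_of_le (add_nonneg h₁ h₂) with hρ | hρ
  · have h1 : σ₁ = 0 := by linarith [le_antisymm (by linarith) h₁]
    have h2 : σ₂ = 0 := by linarith
    have ha : a₁ = a₂ := by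
      have : dist a₁ a₂ ≤ 0 := by linarith
      exact dist_le_zero.1 this
    subst ha; simp [h1, h2]
  · have hρ' : σ₁ + σ₂ ≠ 0 := ne_of_gt hρ
    have hd1 : dist a₁ (a₁ + (σ₂ / (σ₁ + σ₂)) • (a₂ - a₁)) ≤ σ₂ := by
      rw [dist_self_add_right, norm_smul, Real.norm_eq_abs,
        abs_of_nonneg (div_nonneg h₂ hρ.le)]
      calc σ₂ / (σ₁ + σ₂) * ‖a₂ - a₁‖ ≤ σ₂ / (σ₁ + σ₂) * (σ₁ + σ₂) := by
            apply mul_le_mul_of_nonneg_left _ (div_nonneg h₂ hρ.le)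
            rw [← dist_eq_norm]; rwa [dist_comm]
        _ = σ₂ := div_mul_cancel₀ _ hρ'
    have hd2 : dist a₂ (a₁ + (σ₂ / (σ₁ + σ₂)) • (a₂ - a₁)) ≤ σ₁ := by
      have key : a₂ - (a₁ + (σ₂ / (σ₁ + σ₂)) • (a₂ - a₁))
          = (σ₁ / (σ₁ + σ₂)) • (a₂ - a₁) := by
        have hs : σ₁ / (σ₁ + σ₂) = 1 - σ₂ / (σ₁ + σ₂) := by
          field_simp
          ring
        rw [hs, sub_smul, one_smul]; abel
      rw [dist_eq_norm, key, norm_smul, Real.norm_eq_abs,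
        abs_of_nonneg (div_nonneg h₁ hρ.le)]
      calc σ₁ / (σ₁ + σ₂) * ‖a₂ - a₁‖ ≤ σ₁ / (σ₁ + σ₂) * (σ₁ + σ₂) := by
            apply mul_le_mul_of_nonneg_left _ (div_nonneg h₁ hρ.le)
            rw [← dist_eq_norm]; rwa [dist_comm]
        _ = σ₁ := div_mul_cancel₀ _ hρ'
    constructor
    · exact closedBall_subset_closedBall' (by linarith)
    · exact closedBall_subset_closedBall' (by linarith)


lemma merge_aux [DecidableEq E] : ∀ (n : ℕ) (M : Multiset (E × ℝ)), M.card ≤ n →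
    (∀ b ∈ M, 0 ≤ b.2) →
    ∃ P : Multiset ((E × ℝ) × Multiset (E × ℝ)),
      (P.map Prod.snd).sum = M ∧
      (P.map Prod.fst).Pairwise
        (fun b b' => Disjoint (closedBall b.1 b.2) (closedBall b'.1 b'.2)) ∧
      ∀ p ∈ P, p.2 ≠ 0 ∧
        (∀ b ∈ p.2, closedBall b.1 b.2 ⊆ closedBall p.1.1 p.1.2) ∧
        (p.2.map Prod.snd).sum = p.1.2 := by
  intro n
  induction n with
  | zero =>
    intro M hc _
    have : M = 0 := Multiset.card_eq_zero.1 (Nat.le_zero.1 hc)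
    subst this
    exact ⟨0, by simp, ⟨[], by simp, List.Pairwise.nil⟩, by simp⟩
  | succ n ih =>
    intro M hc hr
    by_cases h : ∃ b₁ ∈ M, ∃ b₂ ∈ M.erase b₁,
        ¬ Disjoint (closedBall b₁.1 b₁.2) (closedBall b₂.1 b₂.2)
    · -- merge case
      obtain ⟨b₁, hb₁, b₂, hb₂, hnd⟩ := h
      have hb₂M : b₂ ∈ M := Multiset.mem_of_mem_erase hb₂
      obtain ⟨x, hx₁, hx₂⟩ := Set.not_disjoint_iff.1 hnd
      have hd : dist b₁.1 b₂.1 ≤ b₁.2 + b₂.2 :=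
        (dist_triangle b₁.1 x b₂.1).trans
          (add_le_add (by rwa [dist_comm, ← mem_closedBall]) hx₂)
      have h₁ := hr b₁ hb₁
      have h₂ := hr b₂ hb₂M
      set bm : E × ℝ := (b₁.1 + (b₂.2 / (b₁.2 + b₂.2)) • (b₂.1 - b₁.1), b₁.2 + b₂.2)
        with hbm
      obtain ⟨hsub₁, hsub₂⟩ := merged_subset b₁.1 b₂.1 b₁.2 b₂.2 h₁ h₂ hd
      set T := (M.erase b₁).erase b₂ with hT
      have hM : M = b₁ ::ₘ b₂ ::ₘ T := by
        rw [hT, Multiset.cons_erase hb₂, Multiset.cons_erase hb₁]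
      have hcard : (bm ::ₘ T).card ≤ n := by
        have := Multiset.card_le_card (le_of_eq hM) -- dummy
        have h2 : M.card = T.card + 2 := by rw [hM]; simp
        simp only [Multiset.card_cons]
        omega
      have hr' : ∀ b ∈ bm ::ₘ T, 0 ≤ b.2 := by
        intro b hb
        rcases Multiset.mem_cons.1 hb with rfl | hb
        · exact add_nonneg h₁ h₂
        · exact hr b (Multiset.mem_of_mem_erase (Multiset.mem_of_mem_erase hb))
      obtain ⟨P', hsum, hpw, hgrp⟩ := ih (bm ::ₘ T) hcard hr'
      -- find the group containing bm
      have hbmM' : bm ∈ (P'.map Prod.snd).sum := by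
        rw [hsum]; exact Multiset.mem_cons_self _ _
      obtain ⟨G, hG, hbmG⟩ := Multiset.mem_join.1 hbmM'
      obtain ⟨p, hp, hpG⟩ := Multiset.mem_map.1 hG
      refine ⟨(p.1, b₁ ::ₘ b₂ ::ₘ p.2.erase bm) ::ₘ P'.erase p, ?_, ?_, ?_⟩
      · -- sum of groups = M
        have hP' : p ::ₘ P'.erase p = P' := Multiset.cons_erase hp
        have hp2 : bm ::ₘ p.2.erase bm = p.2 := by
          rw [Multiset.cons_erase]; rw [hpG]; exact hbmG
        have hS : p.2 + ((P'.erase p).map Prod.snd).sum = bm ::ₘ T := by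
          rw [← hsum, ← hP']; simp [Multiset.sum_cons]
        rw [← hp2] at hS
        rw [Multiset.cons_add] at hS
        have hTS : p.2.erase bm + ((P'.erase p).map Prod.snd).sum = T :=
          (Multiset.cons_inj_right bm).1 hS
        simp only [Multiset.map_cons, Multiset.sum_cons]
        rw [Multiset.cons_add, Multiset.cons_add, hTS, ← hM]
      · -- pairwise
        have : ((p.1, b₁ ::ₘ b₂ ::ₘ p.2.erase bm) ::ₘ P'.erase p).map Prod.fst
            = P'.map Prod.fst := by
          conv_rhs => rw [← Multiset.cons_erase hp]
          simp
        rw [this]; exact hpw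
      · -- group conditions
        intro q hq
        rcases Multiset.mem_cons.1 hq with rfl | hq
        · obtain ⟨_, hsub, hsum2⟩ := hgrp p hp
          have hbmp2 : bm ∈ p.2 := by rw [hpG]; exact hbmG
          have hbmsub := hsub bm hbmp2
          refine ⟨by simp, ?_, ?_⟩
          · intro b hb
            rcases Multiset.mem_cons.1 hb with rfl | hb
            · exact hsub₁.trans hbmsub
            rcases Multiset.mem_cons.1 hb with rfl | hb
            · exact hsub₂.trans hbmsub
            · exact hsub b (Multiset.mem_of_mem_erase hb)
          · rw [← Multiset.cons_erase hbmp2] at hsum2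
            simp only [Multiset.map_cons, Multiset.sum_cons] at hsum2 ⊢
            rw [← hsum2]; show b₁.2 + (b₂.2 + _) = (b₁.2 + b₂.2) + _; ring
        · exact hgrp q (Multiset.mem_of_mem_erase hq)
    · -- disjoint case
      push_neg at h
      have hnodup : M.Nodup := by
        by_contra hnd
        rw [Multiset.nodup_iff_count_le_one] at hnd
        push_neg at hnd
        obtain ⟨a, ha⟩ := hnd
        have haM : a ∈ M := Multiset.count_pos.1 (by omega)
        have haE : a ∈ M.erase a := by
          rw [← Multiset.count_pos, Multiset.count_erase_self]; omega
        have := h a haM a haE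
        have hne : (closedBall a.1 a.2).Nonempty := nonempty_closedBall.2 (hr a haM)
        exact hne.ne_empty (by simpa using disjoint_self.1 this)
      refine ⟨M.map (fun b => (b, ({b} : Multiset (E × ℝ)))), ?_, ?_, ?_⟩
      · rw [Multiset.map_map]
        simp only [Function.comp]
        induction M using Multiset.induction_on with
        | empty => simp
        | cons a s ihs => simp_all
      · have hfst : (M.map (fun b => (b, ({b} : Multiset (E × ℝ))))).map Prod.fst = M := by
          rw [Multiset.map_map]; simp [Function.comp]
        rw [hfst]
        refine Multiset.Nodup.pairwise ?_ hnodup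
        intro a ha b hb hab
        exact h a ha b ((Multiset.mem_erase_of_ne (Ne.symm hab)).2 hb)
      · intro p hp
        obtain ⟨b, hb, rfl⟩ := Multiset.mem_map.1 hp
        exact ⟨by simp, by simp, by simp⟩

lemma merge_sum_key {E : Type*} (Q : Multiset ((E × ℝ) × Multiset (E × ℝ)))
    (h : ∀ p ∈ Q, (p.2.map Prod.snd).sum = p.1.2) :
    (((Q.map Prod.snd).sum).map Prod.snd).sum = ((Q.map Prod.fst).map Prod.snd).sum := by
  induction Q using Multiset.induction_on with
  | empty => simp
  | cons p Q ih =>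
    simp only [Multiset.map_cons, Multiset.sum_cons, Multiset.map_add, Multiset.sum_add]
    rw [h p (Multiset.mem_cons_self p Q), ih (fun q hq => h q (Multiset.mem_cons_of_mem hq))]

/-- Merging lemma: any finite collection of closed balls in the plane can be
replaced by a pairwise disjoint collection covering it, with the same total
radius, such that each new ball is obtained by merging a subfamily of the old
balls (which it contains and whose radii sum to its radius). -/
theorem ball_merging_lemma
    (𝓑 : Finset (EuclideanSpace ℝ (Fin 2) × ℝ))
    (hr : ∀ b ∈ 𝓑, 0 ≤ b.2) :
    ∃ 𝓑' : Finset (EuclideanSpace ℝ (Fin 2) × ℝ),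
      (∀ b ∈ 𝓑', 0 ≤ b.2) ∧
      (∀ b₁ ∈ 𝓑', ∀ b₂ ∈ 𝓑', b₁ ≠ b₂ →
        Disjoint (closedBall b₁.1 b₁.2) (closedBall b₂.1 b₂.2)) ∧
      (⋃ b ∈ 𝓑, closedBall b.1 b.2) ⊆ (⋃ b ∈ 𝓑', closedBall b.1 b.2) ∧
      (∑ b ∈ 𝓑', b.2) = (∑ b ∈ 𝓑, b.2) ∧
      ∀ b' ∈ 𝓑', ∃ S ⊆ 𝓑, S.Nonempty ∧
        (∀ b ∈ S, closedBall b.1 b.2 ⊆ closedBall b'.1 b'.2) ∧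
        (∑ b ∈ S, b.2) = b'.2 := by
  classical
  obtain ⟨P, hsum, hpw, hgrp⟩ := merge_aux 𝓑.card 𝓑.val le_rfl hr
  have hmemM : ∀ p ∈ P, ∀ x ∈ p.2, x ∈ 𝓑 := by
    intro p hp x hx
    rw [Finset.mem_def, ← hsum]
    exact Multiset.mem_join.2 ⟨p.2, Multiset.mem_map_of_mem _ hp, hx⟩
  have hball_nonneg : ∀ b ∈ P.map Prod.fst, 0 ≤ b.2 := by
    intro b hb
    obtain ⟨p, hp, rfl⟩ := Multiset.mem_map.1 hb
    obtain ⟨-, -, hs⟩ := hgrp p hp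
    rw [← hs]
    apply Multiset.sum_nonneg
    intro x hx
    obtain ⟨y, hy, rfl⟩ := Multiset.mem_map.1 hx
    exact hr y (hmemM p hp y hy)
  have hnodup : (P.map Prod.fst).Nodup := by
    obtain ⟨l, hl, hlp⟩ := hpw
    rw [Multiset.nodup_iff_pairwise]
    refine ⟨l, hl, hlp.imp_of_mem ?_⟩
    intro a b ha hb hdis hab
    have haP : a ∈ P.map Prod.fst := by rw [hl]; exact ha
    have hne : (closedBall a.1 a.2).Nonempty :=
      nonempty_closedBall.2 (hball_nonneg a haP)
    subst hab
    exact hne.ne_empty (by simpa using disjoint_self.1 hdis)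
  refine ⟨⟨P.map Prod.fst, hnodup⟩, ?_, ?_, ?_, ?_, ?_⟩
  · intro b hb
    exact hball_nonneg b (Finset.mem_mk.1 hb)
  · intro b₁ h₁ b₂ h₂ hne
    haveI : Std.Symm (fun b b' : EuclideanSpace ℝ (Fin 2) × ℝ =>
        Disjoint (closedBall b.1 b.2) (closedBall b'.1 b'.2)) := ⟨fun a b hd => Disjoint.symm hd⟩
    exact hpw.forall (Finset.mem_mk.1 h₁) (Finset.mem_mk.1 h₂) hne
  · intro x hx
    simp only [Set.mem_iUnion] at hx ⊢
    obtain ⟨b, hb, hxb⟩ := hx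
    have hbM : b ∈ (P.map Prod.snd).sum := by rw [hsum]; exact hb
    obtain ⟨G, hG, hbG⟩ := Multiset.mem_join.1 hbM
    obtain ⟨p, hp, rfl⟩ := Multiset.mem_map.1 hG
    refine ⟨p.1, Finset.mem_mk.2 (Multiset.mem_map_of_mem _ hp), ?_⟩
    exact (hgrp p hp).2.1 b hbG hxb
  · rw [Finset.sum_eq_multiset_sum, Finset.sum_eq_multiset_sum]
    show ((P.map Prod.fst).map Prod.snd).sum = (𝓑.val.map Prod.snd).sum
    rw [← hsum]
    exact (merge_sum_key P (fun p hp => (hgrp p hp).2.2)).symm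
  · intro b' hb'
    obtain ⟨p, hp, rfl⟩ := Multiset.mem_map.1 (Finset.mem_mk.1 hb')
    obtain ⟨hne0, hsub, hsumg⟩ := hgrp p hp
    have hle : p.2 ≤ 𝓑.val := by
      rw [← hsum]
      exact Multiset.le_sum_of_mem (Multiset.mem_map_of_mem _ hp)
    have hnd2 : p.2.Nodup := Multiset.nodup_of_le hle 𝓑.nodup
    refine ⟨p.2.toFinset, ?_, ?_, ?_, ?_⟩
    · intro x hx
      exact hmemM p hp x (Multiset.mem_toFinset.1 hx)
    · obtain ⟨x, hx⟩ := Multiset.exists_mem_of_ne_zero hne0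
      exact ⟨x, Multiset.mem_toFinset.2 hx⟩
    · intro b hb
      exact hsub b (Multiset.mem_toFinset.1 hb)
    · rw [Finset.sum_eq_multiset_sum, Multiset.toFinset_val, hnd2.dedup]
      exact hsumg
end

section
/- Let (f_n) be a sequence of approximating integrands (Young functions satisfying (Dec)ᶜ₂ uniformly, with finite vortex energy, converging pointwise to t²/2). Then for all λ, ρ > 0: lim_{n→∞} [∫₀^ρ 2πr·f_n(λ/(2πr)) dr − 𝒱(f_n)·λ²/(4π)] = (λ²/(4π))·log(2πρ/λ), where 𝒱(f) = 2∫₀¹ f(1/r)·r dr. -/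
open MeasureTheory Filter Real

/-- Entropy error: for a sequence of approximating integrands `(f_n)` (Young
functions with uniform `(Dec)ᶜ₂`, finite vortex energy, converging pointwise to
`t²/2`), for all `λ, ρ > 0` one has
`∫₀^ρ 2πr f_n(λ/(2πr)) dr − 𝒱(f_n)·λ²/(4π) → (λ²/(4π))·log(2πρ/λ)`. -/
theorem entropy_error (f : ℕ → ℝ → ℝ) (f' : ℕ → ℝ → ℝ) (t₀ : ℝ) (ht₀ : 0 ≤ t₀)
    (hconv : ∀ n, ConvexOn ℝ (Set.Ici (0:ℝ)) (f n))
    (hmono : ∀ n, MonotoneOn (f n) (Set.Ici (0:ℝ)))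
    (hzero : ∀ n, f n 0 = 0)
    (hnonneg : ∀ n, ∀ x ∈ Set.Ici (0:ℝ), 0 ≤ f n x)
    (hderiv : ∀ n, ∀ t ≥ (0:ℝ), HasDerivWithinAt (f n) (f' n t) (Set.Ioi t) t)
    (hdec : ∀ n, AntitoneOn (fun t => f' n t / t) (Set.Ici t₀))
    (hvint : ∀ n, IntegrableOn (fun s => f n s / s ^ 3) (Set.Ioi (1:ℝ)))
    (hlim : ∀ t ≥ (0:ℝ), Tendsto (fun n => f n t) atTop (nhds (t ^ 2 / 2))) :
    ∀ lam ρ : ℝ, 0 < lam → 0 < ρ →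
      Tendsto (fun n =>
          (∫ r in (0:ℝ)..ρ, 2 * π * r * f n (lam / (2 * π * r)))
            - (2 * ∫ r in (0:ℝ)..1, f n (1 / r) * r) * lam ^ 2 / (4 * π))
        atTop (nhds (lam ^ 2 / (4 * π) * Real.log (2 * π * ρ / lam))) := by
  intro lam ρ hlam hρ
  have hπ : (0:ℝ) < π := Real.pi_pos
  set g : ℕ → ℝ → ℝ := fun n s => f n (1/s) * s with hgdef
  set c : ℝ := 2*π/lam with hcdef
  have hc0 : 0 < c := by positivity
  set b : ℝ := 2*π*ρ/lam with hbdef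
  have hb0 : 0 < b := by positivity
  -- integrability of g on (0,1]
  have hIoo : ∀ n, IntegrableOn (g n) (Set.Ioo 0 1) := by
    intro n
    have himg : (fun x:ℝ => x⁻¹) '' Set.Ioi 1 = Set.Ioo 0 1 := by
      ext y
      constructor
      · rintro ⟨x, hx, rfl⟩
        have hx1 : (1:ℝ) < x := hx
        constructor
        · positivity
        · rw [inv_lt_one_iff₀]; right; exact hx1
      · rintro ⟨hy0, hy1⟩
        exact ⟨y⁻¹, by rw [Set.mem_Ioi]; exact (one_lt_inv_iff₀).mpr ⟨hy0, hy1⟩, by simp⟩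
    have hd : ∀ x ∈ Set.Ioi (1:ℝ), HasDerivWithinAt (fun x:ℝ => x⁻¹) (-((x:ℝ)^2)⁻¹) (Set.Ioi 1) x :=
      fun x hx => (hasDerivAt_inv (by have : (1:ℝ) < x := hx; positivity)).hasDerivWithinAt
    have hinj : Set.InjOn (fun x:ℝ => x⁻¹) (Set.Ioi 1) := inv_injective.injOn
    rw [← himg, integrableOn_image_iff_integrableOn_abs_deriv_smul measurableSet_Ioi hd hinj]
    apply (hvint n).congr_fun _ measurableSet_Ioi
    intro x hx
    have hx1 : (1:ℝ) < x := hx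
    have hx0 : (0:ℝ) < x := by linarith
    simp only [hgdef, smul_eq_mul, one_div, inv_inv, abs_neg, abs_inv,
      abs_of_pos (by positivity : (0:ℝ) < x^2)]
    rw [div_eq_mul_inv, ← inv_pow]
    ring
  -- integrability of g on [1, M]
  have hIcc : ∀ n, ∀ M : ℝ, 1 ≤ M → IntegrableOn (g n) (Set.Ioc 1 M) := by
    intro n M hM
    have hanti : AntitoneOn (fun s => f n (1/s)) (Set.uIcc 1 M) := by
      rw [Set.uIcc_of_le hM]
      intro x hx y hy hxy
      have hx0 : (0:ℝ) < x := lt_of_lt_of_le one_pos hx.1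
      have hy0 : (0:ℝ) < y := lt_of_lt_of_le one_pos hy.1
      exact hmono n (Set.mem_Ici.mpr (by positivity)) (Set.mem_Ici.mpr (by positivity))
        (one_div_le_one_div_of_le hx0 hxy)
    have h1 : IntervalIntegrable (fun s => f n (1/s)) volume 1 M := hanti.intervalIntegrable
    have h2 : IntervalIntegrable (g n) volume 1 M := by
      simpa [hgdef] using h1.mul_continuousOn continuousOn_id
    exact (intervalIntegrable_iff_integrableOn_Ioc_of_le hM).mp h2
  -- integrability of g on [0, M]
  have HgI : ∀ n, ∀ M : ℝ, 0 < M → IntervalIntegrable (g n) volume 0 M := by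
    intro n M hM
    rw [intervalIntegrable_iff_integrableOn_Ioc_of_le hM.le]
    have hsub : Set.Ioc (0:ℝ) M ⊆ Set.Ioc 0 1 ∪ Set.Ioc 1 (max 1 M) := by
      rintro x ⟨hx0, hxM⟩
      by_cases hx1 : x ≤ 1
      · exact Or.inl ⟨hx0, hx1⟩
      · exact Or.inr ⟨lt_of_not_ge hx1, le_trans hxM (le_max_right _ _)⟩
    have h01 : IntegrableOn (g n) (Set.Ioc 0 1) :=
      (integrableOn_Ioc_iff_integrableOn_Ioo).mpr (hIoo n)
    exact (h01.union (hIcc n (max 1 M) (le_max_left _ _))).mono_set hsub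
  -- key identity
  have key : ∀ n, (∫ r in (0:ℝ)..ρ, 2 * π * r * f n (lam / (2 * π * r)))
      - (2 * ∫ r in (0:ℝ)..1, f n (1 / r) * r) * lam ^ 2 / (4 * π)
      = lam^2/(2*π) * ∫ s in (1:ℝ)..b, g n s := by
    intro n
    have hfun : ∀ r : ℝ, 2 * π * r * f n (lam / (2 * π * r)) = lam * g n (c * r) := by
      intro r
      by_cases hr : r = 0
      · simp [hr, hgdef, hzero n]
      · have h1 : 1 / (c * r) = lam / (2 * π * r) := by
          rw [hcdef]; field_simp
        simp only [hgdef, h1]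
        have h2 : lam * c = 2 * π := by rw [hcdef]; field_simp
        calc 2 * π * r * f n (lam / (2 * π * r))
            = (lam * c) * r * f n (lam / (2 * π * r)) := by rw [h2]
          _ = lam * (f n (lam / (2 * π * r)) * (c * r)) := by ring
    have hA : (∫ r in (0:ℝ)..ρ, 2 * π * r * f n (lam / (2 * π * r)))
        = lam^2/(2*π) * ∫ s in (0:ℝ)..b, g n s := by
      rw [intervalIntegral.integral_congr (fun r _ => hfun r),
        intervalIntegral.integral_const_mul,
        intervalIntegral.integral_comp_mul_left (g n) (ne_of_gt hc0)]
      have : c * ρ = b := by rw [hcdef, hbdef]; ring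
      rw [mul_zero, this, smul_eq_mul, ← mul_assoc]
      congr 1
      rw [hcdef]
      field_simp
    have hsub := intervalIntegral.integral_interval_sub_left (HgI n b hb0) (HgI n 1 one_pos)
    have hV : (∫ r in (0:ℝ)..1, f n (1 / r) * r) = ∫ s in (0:ℝ)..1, g n s := rfl
    rw [hA, hV, ← hsub]
    field_simp
    ring
  simp only [key]
  -- dominated convergence
  have hblim : Tendsto (fun n => ∫ s in (1:ℝ)..b, g n s) atTop
      (nhds (∫ s in (1:ℝ)..b, (1/s)^2/2 * s)) := by
    set m : ℝ := min 1 b with hmdef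
    have hm0 : 0 < m := lt_min one_pos hb0
    obtain ⟨C, hC⟩ := (hlim (1/m) (by positivity)).bddAbove_range
    apply intervalIntegral.tendsto_integral_filter_of_dominated_convergence
      (fun _ => C * max 1 b)
    · filter_upwards with n
      exact ((intervalIntegrable_iff.mp
        (((HgI n 1 one_pos).symm).trans (HgI n b hb0))).aestronglyMeasurable)
    · filter_upwards with n
      filter_upwards with x hx
      have hx0 : m < x := hx.1
      have hxM : x ≤ max 1 b := hx.2
      have hx0' : (0:ℝ) < x := lt_trans hm0 hx0
      have hfx : 0 ≤ f n (1/x) := hnonneg n _ (Set.mem_Ici.mpr (by positivity))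
      have hle : f n (1/x) ≤ C := le_trans
        (hmono n (Set.mem_Ici.mpr (by positivity)) (Set.mem_Ici.mpr (by positivity))
          (one_div_le_one_div_of_le hm0 hx0.le))
        (hC ⟨n, rfl⟩)
      have : ‖g n x‖ = f n (1/x) * x := by
        rw [Real.norm_eq_abs, abs_of_nonneg (mul_nonneg hfx hx0'.le)]
      rw [this]
      have hC0 : 0 ≤ C := le_trans hfx hle
      calc f n (1/x) * x ≤ C * x := mul_le_mul_of_nonneg_right hle hx0'.le
        _ ≤ C * max 1 b := mul_le_mul_of_nonneg_left hxM hC0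
    · exact intervalIntegrable_const
    · filter_upwards with x hx
      have hx0 : (0:ℝ) < x := lt_trans hm0 hx.1
      exact (hlim (1/x) (by positivity)).mul_const x
  have hval : (∫ s in (1:ℝ)..b, (1/s)^2/2 * s) = 1/2 * Real.log b := by
    have hcong : ∀ s ∈ Set.uIcc (1:ℝ) b, (1/s)^2/2 * s = 2⁻¹ * s⁻¹ := by
      intro s hs
      have hs0 : 0 < s := lt_of_lt_of_le (lt_min one_pos hb0) hs.1
      field_simp
    rw [intervalIntegral.integral_congr hcong, intervalIntegral.integral_const_mul,
      integral_inv_of_pos one_pos hb0, div_one]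
    ring
  rw [hval] at hblim
  have := hblim.const_mul (lam^2/(2*π))
  convert this using 2
  rw [hbdef]
  ring
end
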